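/- arXiv:0909.1273 — 4 statements merged into one kernel-verified Lean document; each statement's English description precedes it below -/
import Mathlib

section
/- Let λ = (3−√5)/2 = τ², where τ = (√5−1)/2. Then for every x ∈ (0,1), the Tichy–Uitz function g_λ is the limit distribution function of the sequences Ξ_n, i.e. g_{τ²}(x) = lim_{n→∞} #{ξ ∈ Ξ_n : ξ ≤ x} / #Ξ_n. -/
open Set Filter

/-- The mediant of two rationals (written in lowest terms). -/
def mediant (x y : ℚ) : ℚ :=
  ((x.num + y.num : ℤ) : ℚ) / ((x.den + y.den : ℕ) : ℚ)

/-- `x` and `y` are consecutive elements of the set `S`. -/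
def IsConsecutive (S : Set ℚ) (x y : ℚ) : Prop :=
  x ∈ S ∧ y ∈ S ∧ x < y ∧ ∀ z ∈ S, ¬ (x < z ∧ z < y)

/-- The Stern–Brocot sequences `ℱ_n`. -/
def sternBrocot : ℕ → Set ℚ
  | 0 => {0, 1}
  | n + 1 => sternBrocot n ∪
      {z | ∃ x y : ℚ, IsConsecutive (sternBrocot n) x y ∧ z = mediant x y}

/-- `Q_n`, the set of mediants newly inserted at step `n ≥ 1` of the
Stern–Brocot construction. -/
def newMediants (n : ℕ) : Set ℚ :=
  {z | ∃ x y : ℚ, IsConsecutive (sternBrocot (n - 1)) x y ∧ z = mediant x y}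

/-- Value of the regular continued fraction `[0; a_1, …, a_m]`. -/
def cfVal : List ℕ → ℚ
  | [] => 0
  | a :: t => 1 / ((a : ℚ) + cfVal t)

/-- `a` is the regular continued fraction expansion `[0; a_1, …, a_m]` of `x`,
with all partial quotients positive and the last one at least `2`. -/
def IsCF (x : ℚ) (a : List ℕ) : Prop :=
  (∀ ai ∈ a, 1 ≤ ai) ∧ 2 ≤ a.getLastD 0 ∧ x = cfVal a

/-- Value of `b_1 - 1/(b_2 - ⋯ - 1/b_l)` (using the convention `1/0 = 0`,
so that `rrTail [b] = b`). -/
def rrTail : List ℕ → ℚ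
  | [] => 0
  | b :: t => (b : ℚ) - 1 / rrTail t

/-- Value of the regular reduced continued fraction
`[[1; b_1, …, b_l]] = 1 - 1/(b_1 - 1/(b_2 - ⋯ - 1/b_l))`. -/
def rrcfVal (b : List ℕ) : ℚ := 1 - 1 / rrTail b

/-- `b` is the regular reduced continued fraction expansion
`[[1; b_1, …, b_l]]` of `x`, with all entries at least `2`. -/
def IsRRCF (x : ℚ) (b : List ℕ) : Prop :=
  (∀ bi ∈ b, 2 ≤ bi) ∧ x = rrcfVal b

/-- `Θ_k`: rationals in `(0,1)` whose regular reduced continued fraction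
expansion satisfies `L(x) = b_1 + ⋯ + b_l = k + 1`. -/
def Theta (k : ℕ) : Set ℚ :=
  {x | x ∈ Set.Ioo (0 : ℚ) 1 ∧ ∃ b : List ℕ, IsRRCF x b ∧ b.sum = k + 1}

/-- `Ξ_n = {0, 1} ∪ Θ_1 ∪ ⋯ ∪ Θ_n`. -/
def Xi (n : ℕ) : Set ℚ :=
  {0, 1} ∪ ⋃ k ∈ Finset.Icc 1 n, Theta k

namespace TU

structure SB where
  a : ℕ
  b : ℕ
  c : ℕ
  d : ℕ
  e : List ℕ

def step (s : SB) : Bool → SB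
  | true => ⟨s.a + s.c, s.b + s.d, s.c, s.d, (s.e.headD 0 + 1) :: s.e.tail⟩
  | false => ⟨s.a, s.b, s.a + s.c, s.b + s.d, 2 :: s.e⟩

def root : SB := ⟨0, 1, 1, 1, [2]⟩

def nodeF (s : SB) (p : List Bool) : SB := p.foldl step s

def node (p : List Bool) : SB := nodeF root p

def uval (s : SB) : ℚ := (s.a : ℚ) / (s.b : ℚ)
def vval (s : SB) : ℚ := (s.c : ℚ) / (s.d : ℚ)
def mval (s : SB) : ℚ := ((s.a + s.c : ℕ) : ℚ) / ((s.b + s.d : ℕ) : ℚ)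

def NVal (l : List ℕ) (y : ℚ) : ℚ := l.foldr (fun b z => 1 - 1 / ((b : ℚ) - 1 + z)) y

structure Inv (s : SB) : Prop where
  det : s.c * s.b = s.a * s.d + 1
  hb : 1 ≤ s.b
  hd : 1 ≤ s.d
  hab : s.a < s.b
  hcd : s.c ≤ s.d
  hc : 1 ≤ s.c
  hene : s.e ≠ []
  he2 : ∀ x ∈ s.e, 2 ≤ x
  hN : ∀ y : ℚ, 0 ≤ y →
    NVal s.e.reverse y = ((s.a : ℚ) + s.c * y) / ((s.b : ℚ) + s.d * y)

@[simp] lemma nodeF_nil (s : SB) : nodeF s [] = s := rfl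
@[simp] lemma nodeF_cons (s : SB) (t : Bool) (p : List Bool) :
    nodeF s (t :: p) = nodeF (step s t) p := rfl
lemma nodeF_append (s : SB) (p q : List Bool) :
    nodeF s (p ++ q) = nodeF (nodeF s p) q := by
  simp [nodeF, List.foldl_append]
lemma node_snoc (p : List Bool) (t : Bool) :
    node (p ++ [t]) = step (node p) t := by
  simp [node, nodeF_append, nodeF]

@[simp] lemma NVal_nil (y : ℚ) : NVal [] y = y := rfl
lemma NVal_cons (b : ℕ) (l : List ℕ) (y : ℚ) :
    NVal (b :: l) y = 1 - 1 / ((b : ℚ) - 1 + NVal l y) := rfl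
lemma NVal_snoc (l : List ℕ) (b : ℕ) (y : ℚ) :
    NVal (l ++ [b]) y = NVal l (1 - 1 / ((b : ℚ) - 1 + y)) := by
  simp [NVal, List.foldr_append]

lemma inv_root : Inv root := by
  refine ⟨by norm_num [root], by norm_num [root], by norm_num [root], by norm_num [root],
    by norm_num [root], by norm_num [root], by simp [root], ?_, ?_⟩
  · intro x hx
    simp [root] at hx
    omega
  · intro y hy
    have h1y : (0 : ℚ) < 1 + y := by linarith
    show NVal [2] y = _
    rw [show [2] = ([] : List ℕ) ++ [2] by simp, NVal_snoc]
    simp only [NVal_nil, root]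
    push_cast
    rw [show (2:ℚ) - 1 + y = 1 + y by ring]
    rw [eq_div_iff (by linarith : (1:ℚ) + 1 * y ≠ 0)]
    field_simp
    ring

lemma inv_step (s : SB) (h : Inv s) (t : Bool) : Inv (step s t) := by
  cases t
  · -- false
    refine ⟨?_, ?_, ?_, ?_, ?_, ?_, ?_, ?_, ?_⟩
    · show (s.a + s.c) * s.b = s.a * (s.b + s.d) + 1
      calc (s.a + s.c) * s.b = s.a * s.b + s.c * s.b := by ring
        _ = s.a * s.b + (s.a * s.d + 1) := by rw [h.det]
        _ = s.a * (s.b + s.d) + 1 := by ring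
    · exact h.hb
    · show 1 ≤ s.b + s.d
      have := h.hb; omega
    · exact h.hab
    · show s.a + s.c ≤ s.b + s.d
      have := h.hab; have := h.hcd; omega
    · show 1 ≤ s.a + s.c
      have := h.hc; omega
    · simp [step]
    · intro x hx
      simp only [step, List.mem_cons] at hx
      rcases hx with rfl | hx
      · exact le_refl 2
      · exact h.he2 x hx
    · intro y hy
      show NVal ((2 :: s.e).reverse) y = _
      rw [List.reverse_cons, NVal_snoc]
      have h1y : (0 : ℚ) < 1 + y := by linarith
      have e1 : (1 : ℚ) - 1 / (((2:ℕ) : ℚ) - 1 + y) = y / (1 + y) := by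
        push_cast
        rw [show (2 : ℚ) - 1 + y = 1 + y by ring]
        rw [eq_div_iff h1y.ne']
        field_simp
        ring
      rw [e1, h.hN (y / (1 + y)) (div_nonneg hy h1y.le)]
      have hbQ : (1 : ℚ) ≤ (s.b : ℚ) := by exact_mod_cast h.hb
      have hdQ : (0 : ℚ) ≤ (s.d : ℚ) := by positivity
      have hD1 : (0 : ℚ) < (s.b : ℚ) + s.d * (y / (1 + y)) := by
        have : (0:ℚ) ≤ s.d * (y / (1+y)) := by positivity
        linarith
      have hD2 : (0 : ℚ) < (s.b : ℚ) + ((s.b : ℚ) + s.d) * y := by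
        have : (0:ℚ) ≤ ((s.b:ℚ) + s.d) * y := by positivity
        linarith
      show _ = ((s.a : ℚ) + (↑(s.a + s.c)) * y) / ((s.b : ℚ) + (↑(s.b + s.d)) * y)
      push_cast
      rw [div_eq_div_iff hD1.ne' hD2.ne']
      field_simp
      ring
  · -- true
    obtain ⟨h0, t0, he⟩ := List.exists_cons_of_ne_nil h.hene
    refine ⟨?_, ?_, ?_, ?_, ?_, ?_, ?_, ?_, ?_⟩
    · show s.c * (s.b + s.d) = (s.a + s.c) * s.d + 1
      calc s.c * (s.b + s.d) = s.c * s.b + s.c * s.d := by ring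
        _ = (s.a * s.d + 1) + s.c * s.d := by rw [h.det]
        _ = (s.a + s.c) * s.d + 1 := by ring
    · show 1 ≤ s.b + s.d; have := h.hb; omega
    · exact h.hd
    · show s.a + s.c < s.b + s.d
      have := h.hab; have := h.hcd; omega
    · exact h.hcd
    · exact h.hc
    · simp [step]
    · intro x hx
      simp only [step, List.mem_cons] at hx
      rcases hx with rfl | hx
      · have := h.he2 (s.e.headD 0) (by rw [he]; simp)
        omega
      · exact h.he2 x (List.mem_of_mem_tail hx)
    · intro y hy
      show NVal (((s.e.headD 0 + 1) :: s.e.tail).reverse) y = _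
      rw [he]
      simp only [List.headD_cons, List.tail_cons]
      rw [List.reverse_cons, NVal_snoc]
      have e1 : (1:ℚ) - 1 / ((↑(h0+1) : ℚ) - 1 + y) = 1 - 1/((h0:ℚ) - 1 + (1+y)) := by
        push_cast; ring_nf
      rw [e1]
      have : NVal t0.reverse (1 - 1/((h0:ℚ) - 1 + (1+y))) = NVal s.e.reverse (1 + y) := by
        rw [he, List.reverse_cons, NVal_snoc]
      rw [this, h.hN (1+y) (by linarith)]
      show _ = ((↑(s.a + s.c) : ℚ) + s.c * y) / ((↑(s.b + s.d) : ℚ) + s.d * y)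
      congr 1 <;> push_cast <;> ring

end TU

namespace TU

lemma inv_nodeF (p : List Bool) : ∀ s : SB, Inv s → Inv (nodeF s p) := by
  induction p with
  | nil => intro s hs; exact hs
  | cons t p ih => intro s hs; rw [nodeF_cons]; exact ih _ (inv_step s hs t)

lemma inv_node (p : List Bool) : Inv (node p) := inv_nodeF p root inv_root

lemma bQ_pos {s : SB} (h : Inv s) : (0:ℚ) < (s.b : ℚ) := by exact_mod_cast h.hb
lemma dQ_pos {s : SB} (h : Inv s) : (0:ℚ) < (s.d : ℚ) := by exact_mod_cast h.hd
lemma bdQ_pos {s : SB} (h : Inv s) : (0:ℚ) < ((s.b + s.d : ℕ) : ℚ) := by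
  have := h.hb; exact_mod_cast by omega

lemma u_lt_m {s : SB} (h : Inv s) : uval s < mval s := by
  rw [uval, mval]
  rw [div_lt_div_iff₀ (bQ_pos h) (bdQ_pos h)]
  have : s.a * (s.b + s.d) < (s.a + s.c) * s.b := by nlinarith [h.det]
  exact_mod_cast this

lemma m_lt_v {s : SB} (h : Inv s) : mval s < vval s := by
  rw [vval, mval]
  rw [div_lt_div_iff₀ (bdQ_pos h) (dQ_pos h)]
  have : (s.a + s.c) * s.d < s.c * (s.b + s.d) := by nlinarith [h.det]
  exact_mod_cast this

lemma u_lt_v {s : SB} (h : Inv s) : uval s < vval s := (u_lt_m h).trans (m_lt_v h)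

lemma u_nonneg {s : SB} (h : Inv s) : 0 ≤ uval s := by
  rw [uval]; positivity

lemma u_lt_one {s : SB} (h : Inv s) : uval s < 1 := by
  rw [uval, div_lt_one (bQ_pos h)]
  exact_mod_cast h.hab

lemma v_pos {s : SB} (h : Inv s) : 0 < vval s := by
  rw [vval]
  have := h.hc
  have hc : (0:ℚ) < (s.c : ℚ) := by exact_mod_cast by omega
  exact div_pos hc (dQ_pos h)

lemma v_le_one {s : SB} (h : Inv s) : vval s ≤ 1 := by
  rw [vval, div_le_one (dQ_pos h)]
  exact_mod_cast h.hcd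

lemma m_pos {s : SB} (h : Inv s) : 0 < mval s := lt_of_le_of_lt (u_nonneg h) (u_lt_m h)
lemma m_lt_one {s : SB} (h : Inv s) : mval s < 1 := lt_of_lt_of_le (m_lt_v h) (v_le_one h)

@[simp] lemma uval_step_false (s : SB) : uval (step s false) = uval s := rfl
@[simp] lemma uval_step_true (s : SB) : uval (step s true) = mval s := rfl
@[simp] lemma vval_step_false (s : SB) : vval (step s false) = mval s := rfl
@[simp] lemma vval_step_true (s : SB) : vval (step s true) = vval s := rfl

lemma u_le_step {s : SB} (h : Inv s) (t : Bool) : uval s ≤ uval (step s t) := by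
  cases t
  · simp
  · simp; exact (u_lt_m h).le

lemma step_v_le {s : SB} (h : Inv s) (t : Bool) : vval (step s t) ≤ vval s := by
  cases t
  · simp; exact (m_lt_v h).le
  · simp

lemma range (p : List Bool) : ∀ s : SB, Inv s →
    uval s ≤ uval (nodeF s p) ∧ vval (nodeF s p) ≤ vval s := by
  induction p with
  | nil => intro s _; exact ⟨le_refl _, le_refl _⟩
  | cons t p ih =>
    intro s hs
    rw [nodeF_cons]
    obtain ⟨h1, h2⟩ := ih (step s t) (inv_step s hs t)
    exact ⟨(u_le_step hs t).trans h1, h2.trans (step_v_le hs t)⟩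

lemma m_mem (p : List Bool) (s : SB) (h : Inv s) :
    uval s < mval (nodeF s p) ∧ mval (nodeF s p) < vval s := by
  obtain ⟨h1, h2⟩ := range p s h
  have hi := inv_nodeF p s h
  exact ⟨lt_of_le_of_lt h1 (u_lt_m hi), lt_of_lt_of_le (m_lt_v hi) h2⟩

lemma out : ∀ (p q : List Bool) (s : SB), Inv s → ¬ p <+: q →
    mval (nodeF s q) ∉ Set.Ioo (uval (nodeF s p)) (vval (nodeF s p)) := by
  intro p
  induction p with
  | nil => intro q s _ hnp; exact absurd List.nil_prefix hnp
  | cons x p' ih =>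
    intro q s hs hnp
    cases q with
    | nil =>
      rw [nodeF_nil, nodeF_cons]
      obtain ⟨h1, h2⟩ := range p' (step s x) (inv_step s hs x)
      intro hmem
      cases x
      · -- left child : interval ⊆ [u s, m s]
        simp only [vval_step_false] at h2
        exact absurd (lt_of_lt_of_le hmem.2 h2) (lt_irrefl _)
      · simp only [uval_step_true] at h1
        exact absurd (lt_of_le_of_lt h1 hmem.1) (lt_irrefl _)
    | cons y q' =>
      rw [nodeF_cons, nodeF_cons]
      by_cases hxy : x = y
      · subst hxy
        exact ih q' (step s x) (inv_step s hs x)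
            (fun hp => hnp (List.cons_prefix_cons.2 ⟨rfl, hp⟩))
      · obtain ⟨hq1, hq2⟩ := m_mem q' (step s y) (inv_step s hs y)
        obtain ⟨hp1, hp2⟩ := range p' (step s x) (inv_step s hs x)
        intro hmem
        cases x
        · cases y
          · exact hxy rfl
          · -- p-side left (≤ m s), q-side right (> m s)
            simp only [vval_step_false] at hp2
            simp only [uval_step_true] at hq1
            have := hmem.2
            linarith
        · cases y
          · simp only [uval_step_true] at hp1
            simp only [vval_step_false] at hq2
            have := hmem.1
            linarith
          · exact hxy rfl

lemma mval_inj : ∀ (p q : List Bool) (s : SB), Inv s →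
    mval (nodeF s p) = mval (nodeF s q) → p = q := by
  intro p
  induction p with
  | nil =>
    intro q s hs h
    cases q with
    | nil => rfl
    | cons y q' =>
      exfalso
      rw [nodeF_nil, nodeF_cons] at h
      obtain ⟨hq1, hq2⟩ := m_mem q' (step s y) (inv_step s hs y)
      cases y
      · simp only [vval_step_false] at hq2; linarith [h ▸ hq2]
      · simp only [uval_step_true] at hq1; linarith [h ▸ hq1]
  | cons x p' ih =>
    intro q s hs h
    cases q with
    | nil =>
      exfalso
      rw [nodeF_nil, nodeF_cons] at h
      obtain ⟨hp1, hp2⟩ := m_mem p' (step s x) (inv_step s hs x)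
      cases x
      · simp only [vval_step_false] at hp2; linarith
      · simp only [uval_step_true] at hp1; linarith
    | cons y q' =>
      rw [nodeF_cons, nodeF_cons] at h
      by_cases hxy : x = y
      · subst hxy
        rw [ih q' (step s x) (inv_step s hs x) h]
      · exfalso
        obtain ⟨hp1, hp2⟩ := m_mem p' (step s x) (inv_step s hs x)
        obtain ⟨hq1, hq2⟩ := m_mem q' (step s y) (inv_step s hs y)
        cases x
        · cases y
          · exact hxy rfl
          · simp only [vval_step_false] at hp2
            simp only [uval_step_true] at hq1
            linarith
        · cases y
          · simp only [uval_step_true] at hp1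
            simp only [vval_step_false] at hq2
            linarith
          · exact hxy rfl

lemma node_inj {p q : List Bool} (h : mval (node p) = mval (node q)) : p = q :=
  mval_inj p q root inv_root h

/-! ### weights -/

def wt (t : Bool) : ℕ := if t then 1 else 2

def wrel (p : List Bool) : ℕ := (p.map wt).sum

def w (p : List Bool) : ℕ := 1 + wrel p

@[simp] lemma wrel_nil : wrel [] = 0 := rfl
lemma wrel_append (p q : List Bool) : wrel (p ++ q) = wrel p + wrel q := by
  simp [wrel]
@[simp] lemma wrel_cons (t : Bool) (p : List Bool) :
    wrel (t :: p) = wt t + wrel p := by simp [wrel]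
@[simp] lemma wt_true : wt true = 1 := rfl
@[simp] lemma wt_false : wt false = 2 := rfl
lemma wt_pos (t : Bool) : 1 ≤ wt t := by cases t <;> simp [wt]
lemma wt_le (t : Bool) : wt t ≤ 2 := by cases t <;> simp [wt]
lemma length_le_wrel (p : List Bool) : p.length ≤ wrel p := by
  induction p with
  | nil => simp
  | cons t p ih => simp only [wrel_cons, List.length_cons]; have := wt_pos t; omega
lemma w_pos (p : List Bool) : 1 ≤ w p := by simp [w]
@[simp] lemma w_nil : w [] = 1 := rfl
lemma w_snoc_true (p : List Bool) : w (p ++ [true]) = w p + 1 := by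
  simp [w, wrel_append, wrel, wt]; omega
lemma w_snoc_false (p : List Bool) : w (p ++ [false]) = w p + 2 := by
  simp [w, wrel_append, wrel, wt]; omega
lemma w_lt_of_proper_prefix {q p : List Bool} (hq : q <+: p) (hne : q.length < p.length) :
    w q < w p := by
  obtain ⟨r, rfl⟩ := hq
  have : r ≠ [] := by intro h; subst h; simp at hne
  have : 1 ≤ wrel r := by
    cases r with
    | nil => simp_all
    | cons t r => simp only [wrel_cons]; have := wt_pos t; omega
  simp [w, wrel_append]; omega

/-! ### endpoint membership -/

lemma uMem : ∀ p : List Bool, uval (node p) = 0 ∨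
    ∃ q, q <+: p ∧ q.length < p.length ∧ uval (node p) = mval (node q) := by
  intro p
  induction p using List.reverseRecOn with
  | nil => left; simp [node, nodeF, root, uval]
  | append_singleton p t ih =>
    cases t
    · rw [node_snoc]
      rcases ih with h | ⟨q, hq1, hq2, hq3⟩
      · left; simpa using h
      · right
        exact ⟨q, hq1.trans (List.prefix_append _ _), by simp; omega, by simpa using hq3⟩
    · right
      refine ⟨p, List.prefix_append _ _, by simp, ?_⟩
      rw [node_snoc]; rfl

lemma vMem : ∀ p : List Bool, vval (node p) = 1 ∨
    ∃ q, q <+: p ∧ q.length < p.length ∧ vval (node p) = mval (node q) := by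
  intro p
  induction p using List.reverseRecOn with
  | nil => left; simp [node, nodeF, root, vval]
  | append_singleton p t ih =>
    cases t
    · right
      refine ⟨p, List.prefix_append _ _, by simp, ?_⟩
      rw [node_snoc]; rfl
    · rw [node_snoc]
      rcases ih with h | ⟨q, hq1, hq2, hq3⟩
      · left; simpa using h
      · right
        exact ⟨q, hq1.trans (List.prefix_append _ _), by simp; omega, by simpa using hq3⟩

lemma u_replicate (k : ℕ) : ∀ s : SB, uval (nodeF s (List.replicate k false)) = uval s := by
  induction k with
  | zero => intro s; rfl
  | succ k ih =>
    intro s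
    rw [List.replicate_succ, nodeF_cons, ih, uval_step_false]

end TU

namespace TU

lemma num_den_div (a b : ℕ) (hb : 0 < b) (hco : Nat.Coprime a b) :
    ((a : ℚ) / (b : ℚ)).num = (a : ℤ) ∧ ((a : ℚ) / (b : ℚ)).den = b := by
  have hb' : (0 : ℤ) < (b : ℤ) := by exact_mod_cast hb
  have hco' : Nat.Coprime (a : ℤ).natAbs (b : ℤ).natAbs := by
    simpa [Int.natAbs_natCast] using hco
  have h1 : ((a : ℚ) / (b : ℚ)) = (((a : ℤ) : ℚ) / ((b : ℤ) : ℚ)) := by push_cast; ring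
  constructor
  · rw [h1, Rat.num_div_eq_of_coprime hb' hco']
  · rw [h1]
    have := Rat.den_div_eq_of_coprime hb' hco'
    exact_mod_cast this

lemma coprime_ab {s : SB} (h : Inv s) : Nat.Coprime s.a s.b := by
  have h1 : Nat.gcd s.a s.b ∣ s.a * s.d := Dvd.dvd.mul_right (Nat.gcd_dvd_left _ _) _
  have h2 : Nat.gcd s.a s.b ∣ s.c * s.b := Dvd.dvd.mul_left (Nat.gcd_dvd_right _ _) _
  rw [h.det] at h2
  have h3 : Nat.gcd s.a s.b ∣ 1 := by simpa using Nat.dvd_sub h2 h1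
  exact Nat.dvd_one.mp h3

lemma coprime_cd {s : SB} (h : Inv s) : Nat.Coprime s.c s.d := by
  have h1 : Nat.gcd s.c s.d ∣ s.a * s.d := Dvd.dvd.mul_left (Nat.gcd_dvd_right _ _) _
  have h2 : Nat.gcd s.c s.d ∣ s.c * s.b := Dvd.dvd.mul_right (Nat.gcd_dvd_left _ _) _
  rw [h.det] at h2
  have h3 : Nat.gcd s.c s.d ∣ 1 := by simpa using Nat.dvd_sub h2 h1
  exact Nat.dvd_one.mp h3

lemma coprime_m {s : SB} (h : Inv s) : Nat.Coprime (s.a + s.c) (s.b + s.d) := by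
  have e : s.c * (s.b + s.d) = (s.a + s.c) * s.d + 1 := by
    calc s.c * (s.b + s.d) = s.c * s.b + s.c * s.d := by ring
      _ = (s.a * s.d + 1) + s.c * s.d := by rw [h.det]
      _ = (s.a + s.c) * s.d + 1 := by ring
  have h1 : Nat.gcd (s.a + s.c) (s.b + s.d) ∣ (s.a + s.c) * s.d :=
    Dvd.dvd.mul_right (Nat.gcd_dvd_left _ _) _
  have h2 : Nat.gcd (s.a + s.c) (s.b + s.d) ∣ s.c * (s.b + s.d) :=
    Dvd.dvd.mul_left (Nat.gcd_dvd_right _ _) _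
  rw [e] at h2
  have h3 : Nat.gcd (s.a + s.c) (s.b + s.d) ∣ 1 := by simpa using Nat.dvd_sub h2 h1
  exact Nat.dvd_one.mp h3

lemma mediant_eq {s : SB} (h : Inv s) : mediant (uval s) (vval s) = mval s := by
  obtain ⟨hnu, hdu⟩ := num_den_div s.a s.b h.hb (coprime_ab h)
  obtain ⟨hnv, hdv⟩ := num_den_div s.c s.d h.hd (coprime_cd h)
  rw [mediant, uval, vval] at *
  rw [hnu, hnv, hdu, hdv, mval]
  push_cast
  ring

def SBset (n : ℕ) : Set ℚ := {0, 1} ∪ {x | ∃ p : List Bool, p.length < n ∧ x = mval (node p)}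

lemma mem_SBset_le_one {n : ℕ} {z : ℚ} (hz : z ∈ SBset n) : 0 ≤ z ∧ z ≤ 1 := by
  rcases hz with hz | ⟨p, _, rfl⟩
  · rcases hz with rfl | rfl <;> norm_num
  · exact ⟨(m_pos (inv_node p)).le, (m_lt_one (inv_node p)).le⟩

lemma consec (n : ℕ) (hA : sternBrocot n = SBset n) (p : List Bool) (hp : p.length = n) :
    IsConsecutive (sternBrocot n) (uval (node p)) (vval (node p)) := by
  rw [hA]
  have hiv := inv_node p
  refine ⟨?_, ?_, u_lt_v hiv, ?_⟩
  · rcases uMem p with h | ⟨q, _, hql, hqe⟩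
    · left; left; exact h
    · right; exact ⟨q, by omega, hqe⟩
  · rcases vMem p with h | ⟨q, _, hql, hqe⟩
    · left; right; exact h
    · right; exact ⟨q, by omega, hqe⟩
  · rintro z hz ⟨hz1, hz2⟩
    rcases hz with hz | ⟨q, hql, rfl⟩
    · rcases hz with rfl | rfl
      · exact absurd (lt_of_le_of_lt (u_nonneg hiv) hz1) (lt_irrefl _)
      · exact absurd (lt_of_lt_of_le hz2 (v_le_one hiv)) (lt_irrefl _)
    · have hnp : ¬ p <+: q := by
        intro hpre
        have := hpre.length_le
        omega
      exact out p q root inv_root hnp ⟨hz1, hz2⟩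

lemma mem_u_form {n : ℕ} {x : ℚ} (hA : sternBrocot n = SBset n) (hx : x ∈ sternBrocot n) :
    x = 1 ∨ ∃ p : List Bool, p.length = n ∧ x = uval (node p) := by
  rw [hA] at hx
  rcases hx with hx | ⟨q, hql, rfl⟩
  · rcases hx with rfl | rfl
    · right
      refine ⟨List.replicate n false, by simp, ?_⟩
      rw [node, u_replicate]
      simp [root, uval]
    · left; rfl
  · right
    refine ⟨q ++ [true] ++ List.replicate (n - q.length - 1) false, by simp; omega, ?_⟩
    simp only [node, nodeF_append, u_replicate, nodeF_cons, nodeF_nil, uval_step_true]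

lemma consec_ex (n : ℕ) (hA : sternBrocot n = SBset n) (x y : ℚ)
    (h : IsConsecutive (sternBrocot n) x y) :
    ∃ p : List Bool, p.length = n ∧ x = uval (node p) ∧ y = vval (node p) := by
  obtain ⟨hx, hy, hxy, hbet⟩ := h
  have hy1 : y ≤ 1 := (mem_SBset_le_one (hA ▸ hy)).2
  have hx1 : x ≠ 1 := by intro h; subst h; linarith
  rcases mem_u_form hA hx with h | ⟨p, hpl, rfl⟩
  · exact absurd h hx1
  refine ⟨p, hpl, rfl, ?_⟩
  have hiv := inv_node p
  have hvmem : vval (node p) ∈ sternBrocot n := by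
    rw [hA]
    rcases vMem p with h | ⟨q, _, hql, hqe⟩
    · left; right; exact h
    · right; exact ⟨q, by omega, hqe⟩
  have h1 : ¬ (uval (node p) < vval (node p) ∧ vval (node p) < y) := hbet _ hvmem
  have h2 : y ≤ vval (node p) := by
    by_contra hc
    push_neg at hc
    exact h1 ⟨u_lt_v hiv, hc⟩
  rcases eq_or_lt_of_le h2 with h3 | h3
  · exact h3
  · exfalso
    have := consec n hA p hpl
    exact this.2.2.2 y hy ⟨hxy, h3⟩

lemma charA : ∀ n : ℕ, sternBrocot n = SBset n := by
  intro n
  induction n with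
  | zero =>
    rw [sternBrocot]
    ext x
    simp only [SBset, Set.mem_union, Set.mem_setOf_eq]
    constructor
    · intro h; exact Or.inl h
    · rintro (h | ⟨p, hp, _⟩)
      · exact h
      · omega
  | succ n ih =>
    rw [sternBrocot]
    ext x
    simp only [SBset, Set.mem_union, Set.mem_setOf_eq, Set.mem_insert_iff] at *
    constructor
    · rintro (hx | ⟨u, v, hc, rfl⟩)
      · rw [ih] at hx
        rcases hx with hx | ⟨p, hpl, rfl⟩
        · exact Or.inl hx
        · exact Or.inr ⟨p, by omega, rfl⟩
      · obtain ⟨p, hpl, rfl, rfl⟩ := consec_ex n ih u v hc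
        right
        exact ⟨p, by omega, mediant_eq (inv_node p)⟩

    · rintro (hx | ⟨p, hpl, rfl⟩)
      · left; rw [ih]; exact Or.inl hx
      · rcases Nat.lt_or_ge p.length n with hl | hl
        · left; rw [ih]; exact Or.inr ⟨p, hl, rfl⟩
        · right
          have hpl' : p.length = n := by omega
          exact ⟨uval (node p), vval (node p), consec n ih p hpl',
            (mediant_eq (inv_node p)).symm⟩

end TU

namespace TU

lemma esum : ∀ (p : List Bool) (s : SB), Inv s →
    (nodeF s p).e.sum = s.e.sum + wrel p := by
  intro p
  induction p with
  | nil => intro s _; simp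
  | cons t p ih =>
    intro s hs
    rw [nodeF_cons, ih (step s t) (inv_step s hs t)]
    cases t
    · show (2 :: s.e).sum + wrel p = _
      simp [wrel_cons, wt]
      omega
    · obtain ⟨h0, t0, he⟩ := List.exists_cons_of_ne_nil hs.hene
      show ((s.e.headD 0 + 1) :: s.e.tail).sum + wrel p = _
      rw [he]
      simp [wrel_cons, wt]
      omega

lemma esum_node (p : List Bool) : (node p).e.sum = w p + 1 := by
  rw [node, esum p root inv_root]
  simp [root, w]
  omega

lemma rrcf_NVal : ∀ l : List ℕ, rrcfVal l = NVal l 1 := by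
  intro l
  induction l with
  | nil => simp [rrcfVal, rrTail]
  | cons b t ih =>
    rw [rrcfVal, rrTail, NVal_cons, ← ih]
    have : (b:ℚ) - 1 / rrTail t = (b:ℚ) - 1 + rrcfVal t := by
      rw [rrcfVal]; ring
    rw [this]

lemma mval_NVal (p : List Bool) : NVal (node p).e.reverse 1 = mval (node p) := by
  rw [(inv_node p).hN 1 zero_le_one, mval]
  push_cast
  ring_nf

lemma reach : ∀ (m : ℕ) (L : List ℕ), L.sum ≤ m → L ≠ [] → (∀ x ∈ L, 2 ≤ x) →
    ∃ p : List Bool, (node p).e = L := by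
  intro m
  induction m with
  | zero =>
    intro L hsum hne h2
    obtain ⟨h0, t0, rfl⟩ := List.exists_cons_of_ne_nil hne
    have := h2 h0 (by simp)
    simp at hsum
    omega
  | succ m ih =>
    intro L hsum hne h2
    obtain ⟨h0, t0, rfl⟩ := List.exists_cons_of_ne_nil hne
    have hh0 : 2 ≤ h0 := h2 h0 (by simp)
    rcases Nat.lt_or_ge h0 3 with h3 | h3
    · have hh0' : h0 = 2 := by omega
      subst hh0'
      cases t0 with
      | nil => exact ⟨[], rfl⟩
      | cons a t1 =>
        obtain ⟨p, hp⟩ := ih (a :: t1) (by simp at hsum ⊢; omega) (by simp)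
          (fun x hx => h2 x (List.mem_cons_of_mem _ hx))
        refine ⟨p ++ [false], ?_⟩
        rw [node_snoc]
        show 2 :: (node p).e = _
        rw [hp]
    · obtain ⟨p, hp⟩ := ih ((h0 - 1) :: t0) (by simp at hsum ⊢; omega)
        (by simp) (by
          intro x hx
          rcases List.mem_cons.mp hx with rfl | hx
          · omega
          · exact h2 x (List.mem_cons_of_mem _ hx))
      refine ⟨p ++ [true], ?_⟩
      rw [node_snoc]
      show ((node p).e.headD 0 + 1) :: (node p).e.tail = _
      rw [hp]
      simp
      omega

lemma theta_eq (k : ℕ) :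
    Theta k = {x | ∃ p : List Bool, w p = k ∧ x = mval (node p)} := by
  ext x
  simp only [Theta, Set.mem_setOf_eq]
  constructor
  · rintro ⟨hio, b, ⟨hb2, rfl⟩, hsum⟩
    have hbne : b ≠ [] := by
      intro h; subst h; simp at hsum
    obtain ⟨p, hp⟩ := reach (k + 1) b.reverse (by rw [List.sum_reverse, hsum]) (by simpa using hbne)
      (fun x hx => hb2 x (List.mem_reverse.mp hx))
    have hb : b = (node p).e.reverse := by rw [hp, List.reverse_reverse]
    have hwp : w p = k := by
      have h1 := esum_node p
      rw [hp, List.sum_reverse, hsum] at h1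
      omega
    exact ⟨p, hwp, by rw [rrcf_NVal, hb, mval_NVal]⟩
  · rintro ⟨p, hwp, rfl⟩
    have hiv := inv_node p
    refine ⟨⟨m_pos hiv, m_lt_one hiv⟩, (node p).e.reverse, ⟨?_, ?_⟩, ?_⟩
    · intro bi hbi
      exact hiv.he2 bi (List.mem_reverse.mp hbi)
    · rw [rrcf_NVal, mval_NVal]
    · rw [List.sum_reverse, esum_node, hwp]

lemma xi_eq (n : ℕ) (hn : 1 ≤ n) :
    Xi n = {0, 1} ∪ {x | ∃ p : List Bool, w p ≤ n ∧ x = mval (node p)} := by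
  rw [Xi]
  congr 1
  ext x
  simp only [Set.mem_iUnion, Set.mem_setOf_eq, exists_prop, Finset.mem_Icc]
  constructor
  · rintro ⟨k, ⟨hk1, hk2⟩, hx⟩
    rw [theta_eq] at hx
    obtain ⟨p, hwp, rfl⟩ := hx
    exact ⟨p, by omega, rfl⟩
  · rintro ⟨p, hwp, rfl⟩
    refine ⟨w p, ⟨w_pos p, hwp⟩, ?_⟩
    rw [theta_eq]
    exact ⟨p, rfl, rfl⟩

end TU

namespace TU

def PF : ℕ → Finset (List Bool)
  | 0 => {[]}
  | 1 => {[], [true]}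
  | (n+2) => insert []
      (((PF (n+1)).image (fun p => true :: p)) ∪ ((PF n).image (fun p => false :: p)))

lemma wrel_eq_zero {p : List Bool} (h : wrel p = 0) : p = [] := by
  cases p with
  | nil => rfl
  | cons t q => exfalso; have := wt_pos t; simp only [wrel_cons] at h; omega

lemma mem_PF : ∀ (N : ℕ) (p : List Bool), p ∈ PF N ↔ wrel p ≤ N := by
  intro N
  induction N using Nat.strong_induction_on with
  | _ N ih =>
    match N with
    | 0 =>
      intro p
      rw [PF]
      simp only [Finset.mem_singleton]
      constructor
      · rintro rfl; simp
      · intro h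
        exact wrel_eq_zero (by omega)
    | 1 =>
      intro p
      rw [PF]
      simp only [Finset.mem_insert, Finset.mem_singleton]
      constructor
      · rintro (rfl | rfl) <;> simp [wrel, wt]
      · intro h
        cases p with
        | nil => left; rfl
        | cons t q =>
          simp only [wrel_cons] at h
          have h1 := wt_pos t
          have h2 : wrel q = 0 := by omega
          have h3 : wt t = 1 := by omega
          right
          have : t = true := by
            cases t
            · simp [wt] at h3
            · rfl
          rw [this, wrel_eq_zero h2]
    | (n+2) =>
      intro p
      rw [PF]
      simp only [Finset.mem_insert, Finset.mem_union, Finset.mem_image]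
      constructor
      · rintro (rfl | ⟨q, hq, rfl⟩ | ⟨q, hq, rfl⟩)
        · simp
        · rw [ih (n+1) (by omega) q] at hq
          simp only [wrel_cons, wt_true, wt_false]
          omega
        · rw [ih n (by omega) q] at hq
          simp only [wrel_cons, wt_true, wt_false]
          omega
      · intro h
        cases p with
        | nil => left; rfl
        | cons t q =>
          right
          cases t
          · right
            refine ⟨q, ?_, rfl⟩
            rw [ih n (by omega) q]
            simp only [wrel_cons, wt_true, wt_false] at h
            omega
          · left
            refine ⟨q, ?_, rfl⟩
            rw [ih (n+1) (by omega) q]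
            simp only [wrel_cons, wt_true, wt_false] at h
            omega

lemma card_PF : ∀ N : ℕ, (PF N).card = Nat.fib (N + 3) - 1 := by
  intro N
  induction N using Nat.strong_induction_on with
  | _ N ih =>
    match N with
    | 0 => rw [PF]; simp [Nat.fib]
    | 1 => rw [PF]; simp [Nat.fib]
    | (n+2) =>
      rw [PF]
      have hdisj : Disjoint ((PF (n+1)).image (fun p => true :: p))
          ((PF n).image (fun p => false :: p)) := by
        rw [Finset.disjoint_left]
        rintro a ha hb
        simp only [Finset.mem_image] at ha hb
        obtain ⟨q1, _, h1⟩ := ha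
        obtain ⟨q2, _, h2⟩ := hb
        rw [← h1] at h2
        simp at h2
      have hnil : ([] : List Bool) ∉
          ((PF (n+1)).image (fun p => true :: p)) ∪ ((PF n).image (fun p => false :: p)) := by
        simp
      rw [Finset.card_insert_of_notMem hnil, Finset.card_union_of_disjoint hdisj,
        Finset.card_image_of_injective _ (fun a b h => by simpa using h),
        Finset.card_image_of_injective _ (fun a b h => by simpa using h),
        ih (n+1) (by omega), ih n (by omega)]
      have h5 : Nat.fib (n + 2 + 3) = Nat.fib (n + 4) + Nat.fib (n + 3) := by
        rw [show n + 2 + 3 = (n + 3) + 2 by ring, Nat.fib_add_two,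
          show n + 3 + 1 = n + 4 by ring]
        omega
      rw [show n + 1 + 3 = n + 4 by ring]
      have f1 : 0 < Nat.fib (n + 3) := Nat.fib_pos.mpr (by omega)
      have f2 : 0 < Nat.fib (n + 4) := Nat.fib_pos.mpr (by omega)
      omega

noncomputable def XF (n : ℕ) : Finset ℚ :=
  insert 0 (insert 1 ((PF (n - 1)).image (fun p => mval (node p))))

lemma w_append (p q : List Bool) : w (p ++ q) = w p + wrel q := by
  simp [w, wrel_append]
  omega

lemma node_append (p q : List Bool) : node (p ++ q) = nodeF (node p) q := by
  rw [node, nodeF_append, node]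

lemma xi_coe (n : ℕ) (hn : 1 ≤ n) : Xi n = ↑(XF n) := by
  rw [xi_eq n hn]
  ext x
  simp only [XF, Finset.coe_insert, Set.mem_insert_iff, Finset.coe_image, Set.mem_image,
    Finset.mem_coe, Set.mem_union, Set.mem_setOf_eq, Finset.coe_union]
  constructor
  · rintro (h | ⟨p, hwp, rfl⟩)
    · rcases h with rfl | rfl
      · left; rfl
      · right; left; rfl
    · right; right
      exact ⟨p, (mem_PF _ p).mpr (by simp [w] at hwp; omega), rfl⟩
  · rintro (rfl | rfl | ⟨p, hp, rfl⟩)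
    · left; left; rfl
    · left; right; rfl
    · right
      refine ⟨p, ?_, rfl⟩
      rw [mem_PF] at hp
      simp [w]
      omega

lemma mval_injective : Function.Injective (fun p => mval (node p)) := by
  intro p q h
  exact node_inj h

lemma card_XF (n : ℕ) (hn : 1 ≤ n) : (XF n).card = Nat.fib (n + 2) + 1 := by
  rw [XF]
  have h1 : (0 : ℚ) ∉ insert 1 ((PF (n - 1)).image (fun p => mval (node p))) := by
    simp only [Finset.mem_insert, Finset.mem_image]
    rintro (h | ⟨p, _, hp⟩)
    · norm_num at h
    · exact absurd hp.symm (ne_of_gt (m_pos (inv_node p))).symm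
  have h2 : (1 : ℚ) ∉ (PF (n - 1)).image (fun p => mval (node p)) := by
    simp only [Finset.mem_image]
    rintro ⟨p, _, hp⟩
    exact absurd hp (ne_of_lt (m_lt_one (inv_node p)))
  rw [Finset.card_insert_of_notMem h1, Finset.card_insert_of_notMem h2,
    Finset.card_image_of_injective _ mval_injective, card_PF]
  have hidx : n - 1 + 3 = n + 2 := by omega
  rw [hidx]
  have f1 : 0 < Nat.fib (n + 2) := Nat.fib_pos.mpr (by omega)
  omega

lemma ncard_Xi (n : ℕ) (hn : 1 ≤ n) : (Xi n).ncard = Nat.fib (n + 2) + 1 := by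
  rw [xi_coe n hn, Set.ncard_coe_finset, card_XF n hn]

lemma finite_Xi (n : ℕ) (hn : 1 ≤ n) : (Xi n).Finite := by
  rw [xi_coe n hn]
  exact (XF n).finite_toSet

lemma zero_mem_Xi (n : ℕ) : (0 : ℚ) ∈ Xi n := by
  rw [Xi]; left; left; rfl

lemma one_mem_Xi (n : ℕ) : (1 : ℚ) ∈ Xi n := by
  rw [Xi]; left; right; rfl

lemma mval_mem_Xi {n : ℕ} (hn : 1 ≤ n) (p : List Bool) :
    mval (node p) ∈ Xi n ↔ w p ≤ n := by
  rw [xi_eq n hn]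
  constructor
  · rintro (h | ⟨q, hq, he⟩)
    · exfalso
      rcases h with h | h
      · exact absurd h.symm (ne_of_gt (m_pos (inv_node p))).symm
      · exact absurd h (ne_of_lt (m_lt_one (inv_node p)))
    · rw [node_inj he]
      exact hq
  · intro h
    right
    exact ⟨p, h, rfl⟩

lemma mem_Xi_le_one {n : ℕ} {z : ℚ} (hn : 1 ≤ n) (hz : z ∈ Xi n) : 0 ≤ z ∧ z ≤ 1 := by
  rw [xi_eq n hn] at hz
  rcases hz with hz | ⟨p, _, rfl⟩
  · rcases hz with rfl | rfl <;> norm_num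
  · exact ⟨(m_pos (inv_node p)).le, (m_lt_one (inv_node p)).le⟩

lemma v_mem_Xi {n : ℕ} (hn : 1 ≤ n) (p : List Bool) (hw : w p ≤ n) :
    vval (node p) ∈ Xi n := by
  rcases vMem p with h | ⟨q, hq1, hq2, hq3⟩
  · rw [h]; exact one_mem_Xi n
  · rw [hq3, mval_mem_Xi hn]
    have := w_lt_of_proper_prefix hq1 hq2
    omega

lemma ioo_eq (Q : List Bool) (n : ℕ) (hn : 1 ≤ n) (hw : w Q ≤ n) :
    Xi n ∩ Set.Ioo (uval (node Q)) (vval (node Q)) =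
      ↑((PF (n - w Q)).image (fun q => mval (node (Q ++ q)))) := by
  ext x
  simp only [Set.mem_inter_iff, Set.mem_Ioo, Finset.coe_image, Set.mem_image, Finset.mem_coe]
  constructor
  · rintro ⟨hx, hx1, hx2⟩
    rw [xi_eq n hn] at hx
    rcases hx with hx | ⟨p, hwp, rfl⟩
    · exfalso
      rcases hx with rfl | rfl
      · exact absurd hx1 (not_lt.mpr (u_nonneg (inv_node Q)))
      · exact absurd hx2 (not_lt.mpr (v_le_one (inv_node Q)))
    · have hpre : Q <+: p := by
        by_contra hc
        exact out Q p root inv_root hc ⟨hx1, hx2⟩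
      obtain ⟨q, rfl⟩ := hpre
      refine ⟨q, ?_, rfl⟩
      rw [mem_PF]
      rw [w_append] at hwp
      omega
  · rintro ⟨q, hq, rfl⟩
    rw [mem_PF] at hq
    have hxi : mval (node (Q ++ q)) ∈ Xi n := by
      rw [mval_mem_Xi hn, w_append]
      omega
    have hm := m_mem q (node Q) (inv_node Q)
    rw [← node_append] at hm
    exact ⟨hxi, hm.1, hm.2⟩

lemma ioo_ncard (Q : List Bool) (n : ℕ) (hn : 1 ≤ n) (hw : w Q ≤ n) :
    (Xi n ∩ Set.Ioo (uval (node Q)) (vval (node Q))).ncard =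
      Nat.fib (n - w Q + 3) - 1 := by
  rw [ioo_eq Q n hn hw, Set.ncard_coe_finset,
    Finset.card_image_of_injective _ (fun a b h => by
      have := node_inj h
      exact List.append_cancel_left this),
    card_PF]

lemma count_split {n : ℕ} (hn : 1 ≤ n) {u m : ℚ} (hum : u < m) (hm : m ∈ Xi n) :
    {ξ ∈ Xi n | ξ ≤ m}.ncard =
      {ξ ∈ Xi n | ξ ≤ u}.ncard + (Xi n ∩ Set.Ioo u m).ncard + 1 := by
  have hfin := finite_Xi n hn
  have hsplit : {ξ ∈ Xi n | ξ ≤ m} =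
      ({ξ ∈ Xi n | ξ ≤ u} ∪ (Xi n ∩ Set.Ioo u m)) ∪ {m} := by
    ext ξ
    simp only [Set.mem_setOf_eq, Set.mem_union, Set.mem_inter_iff, Set.mem_Ioo,
      Set.mem_singleton_iff]
    constructor
    · rintro ⟨hξ, hle⟩
      rcases le_or_gt ξ u with h1 | h1
      · exact Or.inl (Or.inl ⟨hξ, h1⟩)
      · rcases eq_or_lt_of_le hle with h2 | h2
        · exact Or.inr h2
        · exact Or.inl (Or.inr ⟨hξ, h1, h2⟩)
    · rintro ((⟨h1, h2⟩ | ⟨h1, h2, h3⟩) | rfl)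
      · exact ⟨h1, h2.trans hum.le⟩
      · exact ⟨h1, h3.le⟩
      · exact ⟨hm, le_refl _⟩
  rw [hsplit]
  have hd1 : Disjoint {ξ ∈ Xi n | ξ ≤ u} (Xi n ∩ Set.Ioo u m) := by
    rw [Set.disjoint_left]
    rintro ξ ⟨_, h1⟩ ⟨_, h2, _⟩
    exact absurd (lt_of_le_of_lt h1 h2) (lt_irrefl _)
  have hd2 : Disjoint ({ξ ∈ Xi n | ξ ≤ u} ∪ (Xi n ∩ Set.Ioo u m)) ({m} : Set ℚ) := by
    rw [Set.disjoint_right]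
    rintro ξ rfl
    rintro (⟨_, h1⟩ | ⟨_, _, h2⟩)
    · exact absurd hum (not_lt.mpr h1)
    · exact absurd h2 (lt_irrefl _)
  rw [Set.ncard_union_eq hd2 (Set.Finite.union (hfin.subset (fun ξ hξ => hξ.1))
        (hfin.subset (fun ξ hξ => hξ.1))) (Set.finite_singleton m),
    Set.ncard_union_eq hd1 (hfin.subset (fun ξ hξ => hξ.1)) (hfin.subset (fun ξ hξ => hξ.1)),
    Set.ncard_singleton]

end TU

namespace TU

noncomputable def tau : ℝ := (Real.sqrt 5 - 1) / 2

lemma sqrt5_sq : Real.sqrt 5 ^ 2 = 5 := Real.sq_sqrt (by norm_num)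
lemma sqrt5_nonneg : 0 ≤ Real.sqrt 5 := Real.sqrt_nonneg 5
lemma sqrt5_gt_two : 2 < Real.sqrt 5 := by nlinarith [sqrt5_sq, sqrt5_nonneg]
lemma sqrt5_lt_three : Real.sqrt 5 < 3 := by nlinarith [sqrt5_sq, sqrt5_nonneg]

lemma tau_pos : 0 < tau := by rw [tau]; linarith [sqrt5_gt_two]
lemma tau_lt_one : tau < 1 := by rw [tau]; linarith [sqrt5_lt_three]
lemma tau_nonneg : 0 ≤ tau := tau_pos.le

lemma tau_mul_gold : tau * Real.goldenRatio = 1 := by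
  rw [tau, Real.goldenRatio]
  nlinarith [sqrt5_sq]

lemma tau_sq : tau ^ 2 = (3 - Real.sqrt 5) / 2 := by
  rw [tau]
  nlinarith [sqrt5_sq]

lemma tau_add_tau_sq : tau + tau ^ 2 = 1 := by
  rw [tau]
  nlinarith [sqrt5_sq]

lemma fib_over_gold :
    Filter.Tendsto (fun n : ℕ => (Nat.fib n : ℝ) / Real.goldenRatio ^ n)
      Filter.atTop (nhds (1 / Real.sqrt 5)) := by
  have hgold : (1:ℝ) < Real.goldenRatio := Real.one_lt_goldenRatio
  have hr : |Real.goldenConj / Real.goldenRatio| < 1 := by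
    rw [abs_div, abs_of_pos Real.goldenRatio_pos]
    rw [div_lt_one Real.goldenRatio_pos]
    have h1 : |Real.goldenConj| < 1 := by
      rw [abs_lt]
      constructor
      · exact Real.neg_one_lt_goldenConj
      · have := Real.goldenConj_neg; linarith
    linarith
  have h0 : Filter.Tendsto (fun n : ℕ => (Real.goldenConj / Real.goldenRatio) ^ n)
      Filter.atTop (nhds 0) := tendsto_pow_atTop_nhds_zero_of_abs_lt_one hr
  have h1 : Filter.Tendsto (fun n : ℕ => (1 - (Real.goldenConj / Real.goldenRatio) ^ n) / Real.sqrt 5)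
      Filter.atTop (nhds ((1 - 0) / Real.sqrt 5)) :=
    ((tendsto_const_nhds).sub h0).div_const _
  simp only [sub_zero] at h1
  refine Filter.Tendsto.congr (fun n => ?_) h1
  have hφn : Real.goldenRatio ^ n ≠ 0 := by positivity
  have h5 : Real.sqrt 5 ≠ 0 := by positivity
  rw [Real.coe_fib_eq]
  rw [div_pow]
  field_simp

lemma gold_pow_ne (k : ℕ) : Real.goldenRatio ^ k ≠ 0 := by positivity

lemma fib_ratio_lim (j : ℕ) (hj : 1 ≤ j) :
    Filter.Tendsto (fun n : ℕ => (Nat.fib (n + 3 - j) : ℝ) / ((Nat.fib (n + 2) : ℝ) + 1))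
      Filter.atTop (nhds (tau ^ (j - 1))) := by
  have htop : Filter.Tendsto (fun n : ℕ => n + 3 - j) Filter.atTop Filter.atTop := by
    rw [Filter.tendsto_atTop_atTop]
    intro b
    exact ⟨b + j, fun a ha => by omega⟩
  have hA : Filter.Tendsto (fun n : ℕ => (Nat.fib (n + 3 - j) : ℝ) / Real.goldenRatio ^ (n + 3 - j))
      Filter.atTop (nhds (1 / Real.sqrt 5)) := fib_over_gold.comp htop
  have hB : Filter.Tendsto (fun n : ℕ => (Nat.fib (n + 2) : ℝ) / Real.goldenRatio ^ (n + 2))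
      Filter.atTop (nhds (1 / Real.sqrt 5)) := fib_over_gold.comp (Filter.tendsto_add_atTop_nat 2)
  have hC : Filter.Tendsto (fun n : ℕ => (1:ℝ) / Real.goldenRatio ^ (n + 2))
      Filter.atTop (nhds 0) := by
    have hinv : |Real.goldenRatio⁻¹| < 1 := by
      rw [abs_of_pos (by positivity)]
      rw [inv_lt_one_iff₀]
      right
      exact Real.one_lt_goldenRatio
    have h0 : Filter.Tendsto (fun m : ℕ => (Real.goldenRatio⁻¹) ^ m) Filter.atTop (nhds 0) :=
      tendsto_pow_atTop_nhds_zero_of_abs_lt_one hinv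
    have hcomp := h0.comp (Filter.tendsto_add_atTop_nat 2)
    refine Filter.Tendsto.congr (fun n => ?_) hcomp
    simp only [Function.comp_apply]
    rw [inv_pow, one_div]
  have hden : (1 / Real.sqrt 5 + 0 : ℝ) ≠ 0 := by
    have h : (0:ℝ) < 1 / Real.sqrt 5 + 0 := by positivity
    exact h.ne'
  have hmain : Filter.Tendsto
      (fun n : ℕ => (Nat.fib (n + 3 - j) : ℝ) / Real.goldenRatio ^ (n + 3 - j) /
        ((Nat.fib (n + 2) : ℝ) / Real.goldenRatio ^ (n + 2) + 1 / Real.goldenRatio ^ (n + 2)) *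
        tau ^ (j - 1))
      Filter.atTop (nhds (1 / Real.sqrt 5 / (1 / Real.sqrt 5 + 0) * tau ^ (j - 1))) :=
    (hA.div (hB.add hC) hden).mul tendsto_const_nhds
  have hval : (1 / Real.sqrt 5 / (1 / Real.sqrt 5 + 0) * tau ^ (j - 1) : ℝ) = tau ^ (j - 1) := by
    have h5 : Real.sqrt 5 ≠ 0 := by positivity
    field_simp
    ring
  rw [hval] at hmain
  refine Filter.Tendsto.congr' ?_ hmain
  filter_upwards [Filter.eventually_ge_atTop j] with n hn
  have hXne : Real.goldenRatio ^ (n + 3 - j) ≠ 0 := gold_pow_ne _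
  have hQpos : (0:ℝ) < (Nat.fib (n + 2) : ℝ) + 1 := by positivity
  have hYt : Real.goldenRatio ^ (n + 2) * tau ^ (j - 1) = Real.goldenRatio ^ (n + 3 - j) := by
    have hpow : Real.goldenRatio ^ (n + 3 - j) * Real.goldenRatio ^ (j - 1) = Real.goldenRatio ^ (n + 2) := by
      rw [← pow_add]
      congr 1
      omega
    have htp : tau ^ (j - 1) * Real.goldenRatio ^ (j - 1) = 1 := by
      rw [← mul_pow, tau_mul_gold, one_pow]
    calc Real.goldenRatio ^ (n + 2) * tau ^ (j - 1)
        = Real.goldenRatio ^ (n + 3 - j) * (tau ^ (j-1) * Real.goldenRatio ^ (j - 1)) := by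
          rw [← hpow]; ring
      _ = Real.goldenRatio ^ (n + 3 - j) := by rw [htp, mul_one]
  rw [← add_div, div_div_div_eq, div_mul_eq_mul_div, mul_assoc, hYt,
    mul_comm ((Nat.fib (n + 3 - j) : ℝ)) (Real.goldenRatio ^ (n + 3 - j)),
    mul_div_mul_left _ _ hXne]

lemma fib_sub_one_ratio_lim (j : ℕ) (hj : 1 ≤ j) :
    Filter.Tendsto (fun n : ℕ => ((Nat.fib (n + 3 - j) : ℝ) - 1) / ((Nat.fib (n + 2) : ℝ) + 1))
      Filter.atTop (nhds (tau ^ (j - 1))) := by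
  have h0 : Filter.Tendsto (fun n : ℕ => ((Nat.fib (n + 2) : ℝ) + 1)⁻¹)
      Filter.atTop (nhds 0) := by
    apply Filter.Tendsto.inv_tendsto_atTop
    apply Filter.tendsto_atTop_mono (fun n => ?_) (tendsto_natCast_atTop_atTop (R := ℝ))
    have hfib : n ≤ Nat.fib (n + 2) + 1 := by
      have := Nat.le_fib_add_one (n + 2)
      omega
    have : (n : ℝ) ≤ (Nat.fib (n + 2) : ℝ) + 1 := by exact_mod_cast hfib
    linarith
  have := (fib_ratio_lim j hj).sub h0
  rw [sub_zero] at this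
  refine Filter.Tendsto.congr (fun n => ?_) this
  rw [sub_div]
  congr 1
  rw [one_div]

lemma inv_Nn_lim : Filter.Tendsto (fun n : ℕ => (1:ℝ) / ((Nat.fib (n + 2) : ℝ) + 1))
    Filter.atTop (nhds 0) := by
  have h0 : Filter.Tendsto (fun n : ℕ => ((Nat.fib (n + 2) : ℝ) + 1)⁻¹)
      Filter.atTop (nhds 0) := by
    apply Filter.Tendsto.inv_tendsto_atTop
    apply Filter.tendsto_atTop_mono (fun n => ?_) (tendsto_natCast_atTop_atTop (R := ℝ))
    have hfib : n ≤ Nat.fib (n + 2) + 1 := by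
      have := Nat.le_fib_add_one (n + 2)
      omega
    have : (n : ℝ) ≤ (Nat.fib (n + 2) : ℝ) + 1 := by exact_mod_cast hfib
    linarith
  refine Filter.Tendsto.congr (fun n => ?_) h0
  rw [one_div]

end TU

namespace TU

lemma count_le_zero {n : ℕ} (hn : 1 ≤ n) : {ξ ∈ Xi n | ξ ≤ (0:ℚ)} = {(0:ℚ)} := by
  ext ξ
  simp only [Set.mem_setOf_eq, Set.mem_singleton_iff]
  constructor
  · rintro ⟨hξ, hle⟩
    exact le_antisymm hle (mem_Xi_le_one hn hξ).1
  · rintro rfl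
    exact ⟨zero_mem_Xi n, le_refl _⟩

lemma count_le_one {n : ℕ} (hn : 1 ≤ n) : {ξ ∈ Xi n | ξ ≤ (1:ℚ)} = Xi n := by
  ext ξ
  simp only [Set.mem_setOf_eq]
  exact ⟨fun h => h.1, fun h => ⟨h, (mem_Xi_le_one hn h).2⟩⟩

lemma ncard_Xi_cast {n : ℕ} (hn : 1 ≤ n) :
    ((Xi n).ncard : ℝ) = (Nat.fib (n + 2) : ℝ) + 1 := by
  rw [ncard_Xi n hn]
  push_cast
  ring

lemma uval_node_nil : uval (node []) = 0 := by
  simp [node, nodeF, root, uval]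

lemma vval_node_nil : vval (node []) = 1 := by
  simp [node, nodeF, root, vval]

lemma count_to_m (P : List Bool) {n : ℕ} (hn : w P + 2 ≤ n) :
    ({ξ ∈ Xi n | ξ ≤ mval (node P)}).ncard =
      ({ξ ∈ Xi n | ξ ≤ uval (node P)}).ncard + (Nat.fib (n + 3 - (w P + 2)) - 1) + 1 := by
  have hn1 : 1 ≤ n := by omega
  have hiv := inv_node P
  have hm : mval (node P) ∈ Xi n := by
    rw [mval_mem_Xi hn1]
    omega
  rw [count_split hn1 (u_lt_m hiv) hm]
  congr 1
  congr 1
  have hIoo : Set.Ioo (uval (node P)) (mval (node P)) =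
      Set.Ioo (uval (node (P ++ [false]))) (vval (node (P ++ [false]))) := by
    rw [node_snoc, uval_step_false, vval_step_false]
  rw [hIoo, ioo_ncard (P ++ [false]) n hn1 (by rw [w_snoc_false]; omega), w_snoc_false,
    show n - (w P + 2) + 3 = n + 3 - (w P + 2) by omega]

lemma count_to_v (P : List Bool) {n : ℕ} (hn : w P ≤ n) (hn1 : 1 ≤ n) :
    ({ξ ∈ Xi n | ξ ≤ vval (node P)}).ncard =
      ({ξ ∈ Xi n | ξ ≤ uval (node P)}).ncard + (Nat.fib (n + 3 - w P) - 1) + 1 := by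
  have hiv := inv_node P
  rw [count_split hn1 (u_lt_v hiv) (v_mem_Xi hn1 P hn)]
  congr 1
  congr 1
  rw [ioo_ncard P n hn1 hn, show n - w P + 3 = n + 3 - w P by omega]

section MainLim

variable (g : ℝ → ℝ)

lemma mainLim (hg0 : g 0 = 0) (hg1 : g 1 = 1)
    (hrec : ∀ n : ℕ, ∀ x y : ℚ, IsConsecutive (sternBrocot n) x y →
      g ((mediant x y : ℚ) : ℝ) =
        g (x : ℝ) + (3 - Real.sqrt 5) / 2 * (g (y : ℝ) - g (x : ℝ))) :
    ∀ P : List Bool,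
      Filter.Tendsto (fun n : ℕ =>
          (({ξ ∈ Xi n | ξ ≤ uval (node P)}).ncard : ℝ) / ((Xi n).ncard : ℝ))
        Filter.atTop (nhds (g ((uval (node P) : ℚ) : ℝ)))
      ∧ Filter.Tendsto (fun n : ℕ =>
          (({ξ ∈ Xi n | ξ ≤ vval (node P)}).ncard : ℝ) / ((Xi n).ncard : ℝ))
        Filter.atTop (nhds (g ((vval (node P) : ℚ) : ℝ))) := by
  intro P
  induction P using List.reverseRecOn with
  | nil =>
    constructor
    · rw [uval_node_nil]
      have h0 : g ((0:ℚ) : ℝ) = 0 := by rw [Rat.cast_zero, hg0]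
      rw [h0]
      refine Filter.Tendsto.congr' ?_ inv_Nn_lim
      filter_upwards [Filter.eventually_ge_atTop 1] with n hn
      rw [count_le_zero hn, Set.ncard_singleton, ncard_Xi_cast hn]
      push_cast
      ring
    · rw [vval_node_nil]
      have h1 : g ((1:ℚ) : ℝ) = 1 := by rw [Rat.cast_one, hg1]
      rw [h1]
      refine Filter.Tendsto.congr' ?_ tendsto_const_nhds
      filter_upwards [Filter.eventually_ge_atTop 1] with n hn
      have hpos : (0:ℝ) < ((Xi n).ncard : ℝ) := by
        rw [ncard_Xi_cast hn]; positivity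
      rw [count_le_one hn]
      exact (div_self hpos.ne').symm
  | append_singleton P t IH =>
    obtain ⟨IHu, IHv⟩ := IH
    have hwP := w_pos P
    -- limit of counts up to vval via the fib formula
    have hF' : Filter.Tendsto
        (fun n : ℕ => ((Nat.fib (n + 3 - w P) : ℝ) - 1) / ((Nat.fib (n + 2) : ℝ) + 1))
        Filter.atTop (nhds (tau ^ (w P - 1))) := fib_sub_one_ratio_lim (w P) hwP
    have hconv_v : Filter.Tendsto (fun n : ℕ =>
        (({ξ ∈ Xi n | ξ ≤ vval (node P)}).ncard : ℝ) / ((Xi n).ncard : ℝ))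
        Filter.atTop (nhds (g ((uval (node P) : ℚ) : ℝ) + tau ^ (w P - 1))) := by
      have hlim := (IHu.add hF').add inv_Nn_lim
      rw [add_zero] at hlim
      refine Filter.Tendsto.congr' ?_ hlim
      filter_upwards [Filter.eventually_ge_atTop (w P + 2)] with n hn
      have hn1 : 1 ≤ n := by omega
      have hfib1 : 1 ≤ Nat.fib (n + 3 - w P) := Nat.fib_pos.mpr (by omega)
      rw [count_to_v P (by omega) hn1, ncard_Xi_cast hn1]
      rw [Nat.cast_add, Nat.cast_add, Nat.cast_sub hfib1, Nat.cast_one]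
      ring
    have hdiff : g ((vval (node P) : ℚ) : ℝ) =
        g ((uval (node P) : ℚ) : ℝ) + tau ^ (w P - 1) :=
      tendsto_nhds_unique IHv hconv_v
    -- limit of counts up to mval
    have hF : Filter.Tendsto
        (fun n : ℕ => ((Nat.fib (n + 3 - (w P + 2)) : ℝ) - 1) / ((Nat.fib (n + 2) : ℝ) + 1))
        Filter.atTop (nhds (tau ^ (w P + 1))) := by
      have h := fib_sub_one_ratio_lim (w P + 2) (by omega)
      rw [show w P + 2 - 1 = w P + 1 by omega] at h
      exact h
    have hconv_m : Filter.Tendsto (fun n : ℕ =>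
        (({ξ ∈ Xi n | ξ ≤ mval (node P)}).ncard : ℝ) / ((Xi n).ncard : ℝ))
        Filter.atTop (nhds (g ((uval (node P) : ℚ) : ℝ) + tau ^ (w P + 1))) := by
      have hlim := (IHu.add hF).add inv_Nn_lim
      rw [add_zero] at hlim
      refine Filter.Tendsto.congr' ?_ hlim
      filter_upwards [Filter.eventually_ge_atTop (w P + 2)] with n hn
      have hn1 : 1 ≤ n := by omega
      have hfib1 : 1 ≤ Nat.fib (n + 3 - (w P + 2)) := Nat.fib_pos.mpr (by omega)
      rw [count_to_m P hn, ncard_Xi_cast hn1]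
      rw [Nat.cast_add, Nat.cast_add, Nat.cast_sub hfib1, Nat.cast_one]
      ring
    -- value of g at the mediant
    have hgm : g ((mval (node P) : ℚ) : ℝ) =
        g ((uval (node P) : ℚ) : ℝ) + tau ^ (w P + 1) := by
      have hcons := consec P.length (charA P.length) P rfl
      have h := hrec P.length (uval (node P)) (vval (node P)) hcons
      rw [mediant_eq (inv_node P)] at h
      rw [h, hdiff, ← tau_sq]
      have : tau ^ 2 * tau ^ (w P - 1) = tau ^ (w P + 1) := by
        rw [← pow_add, show 2 + (w P - 1) = w P + 1 by omega]
      rw [show g (↑(uval (node P)) : ℝ) + tau ^ (w P - 1) - g (↑(uval (node P)) : ℝ)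
        = tau ^ (w P - 1) by ring]
      rw [this]
    rw [← hgm] at hconv_m
    cases t
    · constructor
      · simp only [node_snoc, uval_step_false]
        exact IHu
      · simp only [node_snoc, vval_step_false]
        exact hconv_m
    · constructor
      · simp only [node_snoc, uval_step_true]
        exact hconv_m
      · simp only [node_snoc, vval_step_true]
        exact IHv

end MainLim

end TU

namespace TU

lemma cover (x : ℝ) (hx0 : 0 ≤ x) (hx1 : x ≤ 1) :
    ∀ m : ℕ, ∃ P : List Bool, P.length = m ∧
      ((uval (node P) : ℚ) : ℝ) ≤ x ∧ x ≤ ((vval (node P) : ℚ) : ℝ) := by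
  intro m
  induction m with
  | zero =>
    refine ⟨[], rfl, ?_, ?_⟩
    · rw [uval_node_nil]; simpa using hx0
    · rw [vval_node_nil]; simpa using hx1
  | succ m ih =>
    obtain ⟨P, hPl, hPu, hPv⟩ := ih
    rcases le_or_gt x ((mval (node P) : ℚ) : ℝ) with h | h
    · refine ⟨P ++ [false], by simp [hPl], ?_, ?_⟩
      · rw [node_snoc, uval_step_false]; exact hPu
      · rw [node_snoc, vval_step_false]; exact h
    · refine ⟨P ++ [true], by simp [hPl], ?_, ?_⟩
      · rw [node_snoc, uval_step_true]; exact h.le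
      · rw [node_snoc, vval_step_true]; exact hPv

lemma bd_grow : ∀ (p : List Bool) (s : SB), Inv s →
    s.b + s.d + p.length ≤ (nodeF s p).b + (nodeF s p).d := by
  intro p
  induction p with
  | nil => intro s _; simp
  | cons t p ih =>
    intro s hs
    rw [nodeF_cons]
    have h1 := ih (step s t) (inv_step s hs t)
    have h2 : s.b + s.d + 1 ≤ (step s t).b + (step s t).d := by
      cases t
      · show s.b + s.d + 1 ≤ s.b + (s.b + s.d)
        have := hs.hb; omega
      · show s.b + s.d + 1 ≤ (s.b + s.d) + s.d
        have := hs.hd; omega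
    simp only [List.length_cons]
    omega

lemma width_le (P : List Bool) :
    vval (node P) - uval (node P) ≤ 1 / ((P.length : ℚ) + 1) := by
  set s := node P with hs
  have hiv : Inv s := inv_node P
  have hbd : P.length + 2 ≤ s.b + s.d := by
    have := bd_grow P root inv_root
    rw [← node, ← hs] at this
    simp [root] at this
    omega
  have hkey : s.b + s.d ≤ s.b * s.d + 1 := by nlinarith [hiv.hb, hiv.hd]
  have hprod : P.length + 1 ≤ s.b * s.d := by omega
  have hcast : (s.c : ℚ) * (s.b : ℚ) = (s.a : ℚ) * (s.d : ℚ) + 1 := by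
    exact_mod_cast hiv.det
  have hval : vval s - uval s = 1 / ((s.d : ℚ) * (s.b : ℚ)) := by
    rw [vval, uval, div_sub_div _ _ (dQ_pos hiv).ne' (bQ_pos hiv).ne']
    have hnum : (s.c : ℚ) * s.b - (s.d : ℚ) * s.a = 1 := by linear_combination hcast
    rw [hnum]
  rw [hval]
  have hlen : ((P.length : ℚ) + 1) ≤ (s.d : ℚ) * (s.b : ℚ) := by
    have : ((P.length + 1 : ℕ) : ℚ) ≤ ((s.d * s.b : ℕ) : ℚ) := by
      exact_mod_cast (by rw [Nat.mul_comm]; exact hprod : P.length + 1 ≤ s.d * s.b)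
    push_cast at this
    linarith
  have hpos : (0:ℚ) < (P.length : ℚ) + 1 := by positivity
  exact one_div_le_one_div_of_le hpos hlen

lemma count_sub_mono {n : ℕ} (hn : 1 ≤ n) {u : ℚ} {x : ℝ} (h : (u : ℝ) ≤ x) :
    ({ξ ∈ Xi n | ξ ≤ u}).ncard ≤ ({ξ ∈ Xi n | (ξ : ℝ) ≤ x}).ncard := by
  apply Set.ncard_le_ncard
  · rintro ξ ⟨h1, h2⟩
    refine ⟨h1, ?_⟩
    have : (ξ : ℝ) ≤ (u : ℝ) := by exact_mod_cast h2
    linarith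
  · exact (finite_Xi n hn).subset (fun ξ hξ => hξ.1)

lemma count_sup_mono {n : ℕ} (hn : 1 ≤ n) {v : ℚ} {x : ℝ} (h : x ≤ (v : ℝ)) :
    ({ξ ∈ Xi n | (ξ : ℝ) ≤ x}).ncard ≤ ({ξ ∈ Xi n | ξ ≤ v}).ncard := by
  apply Set.ncard_le_ncard
  · rintro ξ ⟨h1, h2⟩
    refine ⟨h1, ?_⟩
    have : (ξ : ℝ) ≤ (v : ℝ) := by linarith
    exact_mod_cast this
  · exact (finite_Xi n hn).subset (fun ξ hξ => hξ.1)

end TU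


/-- For `λ = (3 − √5)/2 = τ²`, the Tichy–Uitz function `g_λ`
(defined on rationals by the mediant recursion and extended continuously)
is the limit distribution function of the sequences `Ξ_n`. -/
theorem tichyUitz_is_distribution_of_Xi
    (g : ℝ → ℝ)
    (hg0 : g 0 = 0) (hg1 : g 1 = 1)
    (hgc : ContinuousOn g (Set.Icc (0 : ℝ) 1))
    (hrec : ∀ n : ℕ, ∀ x y : ℚ, IsConsecutive (sternBrocot n) x y →
      g ((mediant x y : ℚ) : ℝ) =
        g (x : ℝ) + (3 - Real.sqrt 5) / 2 * (g (y : ℝ) - g (x : ℝ))) :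
    ∀ x ∈ Set.Ioo (0 : ℝ) 1,
      Filter.Tendsto
        (fun n : ℕ =>
          (({ξ ∈ Xi n | (ξ : ℝ) ≤ x}).ncard : ℝ) / ((Xi n).ncard : ℝ))
        Filter.atTop (nhds (g x)) := by
  intro x hx
  obtain ⟨hx0, hx1⟩ := hx
  rw [Metric.tendsto_atTop]
  intro ε hε
  have hcx : ContinuousWithinAt g (Set.Icc 0 1) x := hgc x ⟨hx0.le, hx1.le⟩
  rw [Metric.continuousWithinAt_iff] at hcx
  obtain ⟨δ, hδ, hδprop⟩ := hcx (ε / 2) (by positivity)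
  obtain ⟨m, hm⟩ := exists_nat_gt (1 / δ)
  have hmδ : 1 / ((m : ℝ) + 1) < δ := by
    have h1 : 1 / δ < (m : ℝ) + 1 := by linarith
    rw [div_lt_iff₀ hδ] at h1
    rw [div_lt_iff₀ (show (0:ℝ) < (m : ℝ) + 1 by positivity)]
    nlinarith
  obtain ⟨P, hPlen, hPu, hPv⟩ := TU.cover x hx0.le hx1.le m
  set u : ℚ := TU.uval (TU.node P) with hu
  set v : ℚ := TU.vval (TU.node P) with hv
  have hiv := TU.inv_node P
  have hwidthQ : v - u ≤ 1 / ((m : ℚ) + 1) := by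
    have := TU.width_le P
    rw [hPlen] at this
    exact this
  have hwidth : (v : ℝ) - (u : ℝ) ≤ 1 / ((m : ℝ) + 1) := by
    have : ((v - u : ℚ) : ℝ) ≤ ((1 / ((m : ℚ) + 1) : ℚ) : ℝ) := by exact_mod_cast hwidthQ
    push_cast at this
    linarith
  have hu_in : (u : ℝ) ∈ Set.Icc (0:ℝ) 1 := by
    constructor
    · have := TU.u_nonneg hiv; exact_mod_cast this
    · have := (TU.u_lt_one hiv).le
      exact_mod_cast this
  have hv_in : (v : ℝ) ∈ Set.Icc (0:ℝ) 1 := by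
    constructor
    · have := (TU.v_pos hiv).le; exact_mod_cast this
    · have := TU.v_le_one hiv; exact_mod_cast this
  have hdu : dist (u : ℝ) x < δ := by
    rw [Real.dist_eq, abs_of_nonpos (by linarith)]
    have : x ≤ (v : ℝ) := hPv
    linarith
  have hdv : dist (v : ℝ) x < δ := by
    rw [Real.dist_eq, abs_of_nonneg (by linarith)]
    linarith
  have hgu : |g (u : ℝ) - g x| < ε / 2 := by
    have := hδprop hu_in hdu
    rwa [Real.dist_eq] at this
  have hgv : |g (v : ℝ) - g x| < ε / 2 := by
    have := hδprop hv_in hdv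
    rwa [Real.dist_eq] at this
  obtain ⟨hLu, hLv⟩ := TU.mainLim g hg0 hg1 hrec P
  rw [Metric.tendsto_atTop] at hLu hLv
  obtain ⟨N1, hN1⟩ := hLu (ε / 2) (by positivity)
  obtain ⟨N2, hN2⟩ := hLv (ε / 2) (by positivity)
  refine ⟨max (max N1 N2) 1, fun n hn => ?_⟩
  have hn1 : 1 ≤ n := le_trans (le_max_right _ _) hn
  have hnN1 : N1 ≤ n := le_trans (le_trans (le_max_left _ _) (le_max_left _ _)) hn
  have hnN2 : N2 ≤ n := le_trans (le_trans (le_max_right _ _) (le_max_left _ _)) hn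
  have hNpos : (0:ℝ) < ((Xi n).ncard : ℝ) := by
    rw [TU.ncard_Xi_cast hn1]; positivity
  have hb1 := hN1 n hnN1
  have hb2 := hN2 n hnN2
  rw [Real.dist_eq, abs_lt] at hb1 hb2
  have hle1 : (({ξ ∈ Xi n | ξ ≤ u}).ncard : ℝ) ≤ (({ξ ∈ Xi n | (ξ : ℝ) ≤ x}).ncard : ℝ) := by
    exact_mod_cast TU.count_sub_mono hn1 hPu
  have hle2 : (({ξ ∈ Xi n | (ξ : ℝ) ≤ x}).ncard : ℝ) ≤ (({ξ ∈ Xi n | ξ ≤ v}).ncard : ℝ) := by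
    exact_mod_cast TU.count_sup_mono hn1 hPv
  have hd1 : (({ξ ∈ Xi n | ξ ≤ u}).ncard : ℝ) / ((Xi n).ncard : ℝ) ≤
      (({ξ ∈ Xi n | (ξ : ℝ) ≤ x}).ncard : ℝ) / ((Xi n).ncard : ℝ) :=
    (div_le_div_iff_of_pos_right hNpos).mpr hle1
  have hd2 : (({ξ ∈ Xi n | (ξ : ℝ) ≤ x}).ncard : ℝ) / ((Xi n).ncard : ℝ) ≤
      (({ξ ∈ Xi n | ξ ≤ v}).ncard : ℝ) / ((Xi n).ncard : ℝ) :=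
    (div_le_div_iff_of_pos_right hNpos).mpr hle2
  have hgu' := abs_lt.mp hgu
  have hgv' := abs_lt.mp hgv
  rw [Real.dist_eq, abs_lt]
  constructor
  · linarith [hb1.1]
  · linarith [hb2.2]
end

section
/- Let λ ∈ (0,1) and let x ∈ (0,1) be rational with regular continued fraction expansion x = [0; a_1, …, a_m] (a_i positive integers, a_m ≥ 2). Then g_λ(x) = Σ_{j=1}^{m} (−1)^{j+1} · λ^{(Σ_{1≤i≤j, i odd} a_i) − 1} · (1−λ)^{Σ_{1≤i≤j, i even} a_i}. In particular g_λ(1/a_1) = λ^{a_1−1}. -/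
open Set Filter

namespace TU

/-- the map `x ↦ x/(1+x)`. -/
def Lm (x : ℚ) : ℚ := x / (1 + x)

lemma Lm_zero : Lm 0 = 0 := by norm_num [Lm]

lemma Lm_one : Lm 1 = 1/2 := by norm_num [Lm]

lemma Lm_div {A B : ℚ} (hA : 0 ≤ A) (hB : 0 < B) : Lm (A / B) = A / (A + B) := by
  rcases eq_or_lt_of_le hA with h | h
  · simp [Lm, ← h]
  · have h1 : (0:ℚ) < A + B := by linarith
    have h2 : (0:ℚ) < 1 + A / B := by positivity
    unfold Lm
    rw [div_eq_div_iff h2.ne' h1.ne']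
    field_simp
    ring

lemma Lm_lt_iff {x y : ℚ} (hx : 0 ≤ x) (hy : 0 ≤ y) : Lm x < Lm y ↔ x < y := by
  have h1 : (0:ℚ) < 1 + x := by linarith
  have h2 : (0:ℚ) < 1 + y := by linarith
  unfold Lm
  rw [div_lt_div_iff₀ h1 h2]
  constructor <;> intro h <;> nlinarith

lemma Lm_nonneg {x : ℚ} (hx : 0 ≤ x) : 0 ≤ Lm x := by
  unfold Lm; positivity

lemma Lm_le_half {x : ℚ} (hx : 0 ≤ x) (hx1 : x ≤ 1) : Lm x ≤ 1/2 := by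
  have h1 : (0:ℚ) < 1 + x := by linarith
  unfold Lm
  rw [div_le_div_iff₀ h1 (by norm_num)]
  linarith

lemma Lm_num {x : ℚ} (hx : 0 ≤ x) :
    (Lm x).num = x.num ∧ ((Lm x).den : ℤ) = x.num + x.den := by
  have hd : (0:ℤ) < (x.den : ℤ) := by exact_mod_cast x.pos
  have hn : 0 ≤ x.num := Rat.num_nonneg.mpr hx
  have hb : (0:ℤ) < x.num + x.den := by linarith
  have habs : (x.num + (x.den:ℤ)).natAbs = x.num.natAbs + x.den := by omega
  have hco : Nat.Coprime x.num.natAbs (x.num + (x.den:ℤ)).natAbs := by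
    rw [habs]
    simpa [Nat.coprime_add_self_right] using x.reduced
  have heq : Lm x = (x.num : ℚ) / ((x.num + (x.den:ℤ) : ℤ) : ℚ) := by
    conv_lhs => rw [← Rat.num_div_den x]
    rw [Lm_div (by exact_mod_cast hn) (by exact_mod_cast hd)]
    push_cast
    ring_nf
  rw [heq]
  exact ⟨Rat.num_div_eq_of_coprime hb hco, Rat.den_div_eq_of_coprime hb hco⟩

lemma sg_num {x : ℚ} (hx : 0 ≤ x) (hx1 : x ≤ 1) :
    (1 - x).num = (x.den : ℤ) - x.num ∧ (((1 - x).den : ℤ)) = x.den := by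
  have hd : (0:ℤ) < (x.den : ℤ) := by exact_mod_cast x.pos
  have hn : 0 ≤ x.num := Rat.num_nonneg.mpr hx
  have hn1 : x.num ≤ (x.den : ℤ) := by
    have h : (x.num : ℚ) ≤ (x.den : ℚ) := by
      rw [← Rat.num_div_den x] at hx1
      have := (div_le_one (show (0:ℚ) < (x.den:ℚ) by exact_mod_cast x.pos)).mp hx1
      exact_mod_cast this
    exact_mod_cast h
  have hb : (0:ℤ) < (x.den : ℤ) := hd
  have habs : ((x.den:ℤ) - x.num).natAbs ≤ x.den := by omega
  have hco : Nat.Coprime ((x.den:ℤ) - x.num).natAbs ((x.den:ℤ)).natAbs := by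
    have hx' : IsCoprime x.num (x.den : ℤ) := by
      rw [Int.isCoprime_iff_gcd_eq_one]
      simpa [Int.gcd] using x.reduced
    have h2 : IsCoprime ((x.den:ℤ) - x.num) (x.den : ℤ) := by
      have := hx'.neg_left
      simpa [sub_eq_add_neg, add_comm] using this.add_mul_left_left 1
    have h3 := Int.isCoprime_iff_gcd_eq_one.mp h2
    simpa [Int.gcd, Nat.Coprime] using h3
  have heq : 1 - x = (((x.den:ℤ) - x.num : ℤ) : ℚ) / (((x.den:ℤ) : ℤ) : ℚ) := by
    conv_lhs => rw [← Rat.num_div_den x]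
    have hdq : ((x.den:ℚ)) ≠ 0 := by exact_mod_cast x.pos.ne'
    field_simp
    push_cast; ring
  rw [heq]
  constructor
  · simpa using Rat.num_div_eq_of_coprime hb hco
  · simpa using Rat.den_div_eq_of_coprime hb hco


lemma num_lt_of_lt {u v : ℚ} (h : u < v) : u.num * v.den < v.num * u.den := by
  have hud : (0:ℚ) < (u.den : ℚ) := by exact_mod_cast u.pos
  have hvd : (0:ℚ) < (v.den : ℚ) := by exact_mod_cast v.pos
  rw [← Rat.num_div_den u, ← Rat.num_div_den v, div_lt_div_iff₀ hud hvd] at h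
  exact_mod_cast h

lemma mediant_mem_Ioo {u v : ℚ} (h : u < v) : mediant u v ∈ Set.Ioo u v := by
  have hud : (0:ℚ) < (u.den : ℚ) := by exact_mod_cast u.pos
  have hvd : (0:ℚ) < (v.den : ℚ) := by exact_mod_cast v.pos
  have hk := num_lt_of_lt h
  have hk' : (u.num : ℚ) * v.den < (v.num : ℚ) * u.den := by exact_mod_cast hk
  constructor
  · conv_lhs => rw [← Rat.num_div_den u]
    unfold mediant
    rw [div_lt_div_iff₀ hud (by positivity)]
    push_cast
    nlinarith
  · conv_rhs => rw [← Rat.num_div_den v]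
    unfold mediant
    rw [div_lt_div_iff₀ (by positivity) hvd]
    push_cast
    nlinarith

lemma Lm_mediant {u v : ℚ} (hu : 0 ≤ u) (hv : 0 ≤ v) :
    mediant (Lm u) (Lm v) = Lm (mediant u v) := by
  have hun : 0 ≤ u.num := Rat.num_nonneg.mpr hu
  have hvn : 0 ≤ v.num := Rat.num_nonneg.mpr hv
  have hA : (0:ℚ) ≤ ((u.num + v.num : ℤ) : ℚ) := by exact_mod_cast by omega
  have hB : (0:ℚ) < ((u.den + v.den : ℕ) : ℚ) := by
    have := u.pos; have := v.pos
    exact_mod_cast by omega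
  rw [show mediant u v = ((u.num + v.num : ℤ) : ℚ) / ((u.den + v.den : ℕ) : ℚ) from rfl,
    Lm_div hA hB]
  unfold mediant
  rw [(Lm_num hu).1, (Lm_num hv).1]
  have h1 : (((Lm u).den + (Lm v).den : ℕ) : ℚ) = ((u.num + v.num : ℤ) : ℚ) + ((u.den + v.den : ℕ) : ℚ) := by
    have a1 := (Lm_num hu).2
    have a2 := (Lm_num hv).2
    push_cast
    have b1 : ((Lm u).den : ℚ) = (u.num : ℚ) + u.den := by exact_mod_cast congrArg (Int.cast : ℤ → ℚ) a1
    have b2 : ((Lm v).den : ℚ) = (v.num : ℚ) + v.den := by exact_mod_cast congrArg (Int.cast : ℤ → ℚ) a2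
    rw [b1, b2]; ring
  rw [h1]

lemma sg_mediant {u v : ℚ} (hu0 : 0 ≤ u) (hu1 : u ≤ 1) (hv0 : 0 ≤ v) (hv1 : v ≤ 1) :
    mediant (1 - v) (1 - u) = 1 - mediant u v := by
  have hB : (0:ℚ) < ((u.den + v.den : ℕ) : ℚ) := by
    have := u.pos; have := v.pos
    exact_mod_cast by omega
  unfold mediant
  rw [(sg_num hu0 hu1).1, (sg_num hv0 hv1).1]
  have h1 : (((1-v).den + (1-u).den : ℕ) : ℚ) = ((u.den + v.den : ℕ) : ℚ) := by
    have a1 := (sg_num hu0 hu1).2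
    have a2 := (sg_num hv0 hv1).2
    push_cast
    have b1 : ((1-u).den : ℚ) = (u.den : ℚ) := by exact_mod_cast congrArg (Int.cast : ℤ → ℚ) a1
    have b2 : ((1-v).den : ℚ) = (v.den : ℚ) := by exact_mod_cast congrArg (Int.cast : ℤ → ℚ) a2
    rw [b1, b2]; ring
  rw [h1]
  rw [eq_sub_iff_add_eq, ← add_div, div_eq_one_iff_eq hB.ne']
  push_cast
  ring


lemma sb_succ_subset (n : ℕ) : sternBrocot n ⊆ sternBrocot (n+1) :=
  Set.subset_union_left

lemma sb_mono {m n : ℕ} (h : m ≤ n) : sternBrocot m ⊆ sternBrocot n := by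
  induction h with
  | refl => exact subset_rfl
  | step h ih => exact ih.trans (sb_succ_subset _)

lemma zero_mem : ∀ n, (0:ℚ) ∈ sternBrocot n := by
  intro n
  induction n with
  | zero => exact Or.inl rfl
  | succ n ih => exact Or.inl ih

lemma one_mem : ∀ n, (1:ℚ) ∈ sternBrocot n := by
  intro n
  induction n with
  | zero => exact Or.inr rfl
  | succ n ih => exact Or.inl ih

lemma mem_sb_succ_of_consec {n : ℕ} {u v : ℚ} (h : IsConsecutive (sternBrocot n) u v) :
    mediant u v ∈ sternBrocot (n+1) :=
  Set.mem_union_right _ ⟨u, v, h, rfl⟩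

lemma sb_icc : ∀ n, sternBrocot n ⊆ Set.Icc (0:ℚ) 1 := by
  intro n
  induction n with
  | zero => rintro z (rfl | rfl) <;> norm_num
  | succ n ih =>
    rintro z (hz | ⟨x, y, hc, rfl⟩)
    · exact ih hz
    · obtain ⟨hx0, hx1⟩ := ih hc.1
      obtain ⟨hy0, hy1⟩ := ih hc.2.1
      have hm := mediant_mem_Ioo hc.2.2.1
      exact ⟨le_trans hx0 (le_of_lt hm.1), le_trans (le_of_lt hm.2) hy1⟩

lemma consec01 : IsConsecutive (sternBrocot 0) 0 1 := by
  refine ⟨Or.inl rfl, Or.inr rfl, by norm_num, ?_⟩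
  rintro z (rfl | rfl) ⟨h1, h2⟩ <;> linarith

lemma mediant_zero_one : mediant 0 1 = 1/2 := by
  norm_num [mediant]

lemma half_mem : ∀ n, (1/2 : ℚ) ∈ sternBrocot (n+1) := by
  intro n
  induction n with
  | zero => rw [← mediant_zero_one]; exact mem_sb_succ_of_consec consec01
  | succ n ih => exact Or.inl ih

lemma consec_Lm_aux {n : ℕ}
    (hE : ∀ z ∈ sternBrocot n, Lm z ∈ sternBrocot (n+1))
    (hD : ∀ w ∈ sternBrocot (n+1), 0 < w → w ≤ 1/2 → ∃ z ∈ sternBrocot n, w = Lm z)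
    {u v : ℚ} (h : IsConsecutive (sternBrocot n) u v) :
    IsConsecutive (sternBrocot (n+1)) (Lm u) (Lm v) := by
  obtain ⟨hu, hv, huv, hbet⟩ := h
  obtain ⟨hu0, hu1⟩ := sb_icc n hu
  obtain ⟨hv0, hv1⟩ := sb_icc n hv
  refine ⟨hE u hu, hE v hv, (Lm_lt_iff hu0 hv0).mpr huv, ?_⟩
  rintro w hw ⟨h1, h2⟩
  have hw0 : 0 < w := lt_of_le_of_lt (Lm_nonneg hu0) h1
  have hwh : w ≤ 1/2 := le_of_lt (lt_of_lt_of_le h2 (Lm_le_half hv0 hv1))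
  obtain ⟨z, hz, rfl⟩ := hD w hw hw0 hwh
  obtain ⟨hz0, hz1⟩ := sb_icc n hz
  exact hbet z hz ⟨(Lm_lt_iff hu0 hz0).mp h1, (Lm_lt_iff hz0 hv0).mp h2⟩

lemma Lm_mem_surj : ∀ n : ℕ,
    (∀ z ∈ sternBrocot n, Lm z ∈ sternBrocot (n+1)) ∧
    (∀ w ∈ sternBrocot (n+1), 0 < w → w ≤ 1/2 → ∃ z ∈ sternBrocot n, w = Lm z) := by
  intro n
  induction n with
  | zero =>
    constructor
    · rintro z (rfl | rfl)
      · rw [Lm_zero]; exact zero_mem 1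
      · rw [Lm_one]; exact half_mem 0
    · rintro w hw hw0 hwh
      rcases hw with (rfl | rfl) | ⟨x, y, hc, rfl⟩
      · exact absurd hw0 (by norm_num)
      · exact absurd hwh (by norm_num)
      · obtain ⟨hx, hy, hxy, _⟩ := hc
        rcases hx with rfl | rfl <;> rcases hy with rfl | rfl
        · exact absurd hxy (by norm_num)
        · exact ⟨1, Or.inr rfl, by rw [mediant_zero_one, Lm_one]⟩
        · exact absurd hxy (by norm_num)
        · exact absurd hxy (by norm_num)
  | succ n ih =>
    obtain ⟨hE, hD⟩ := ih
    have hE' : ∀ z ∈ sternBrocot (n+1), Lm z ∈ sternBrocot (n+2) := by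
      rintro z (hz | ⟨u, v, hc, rfl⟩)
      · exact sb_succ_subset (n+1) (hE z hz)
      · obtain ⟨hu0, _⟩ := sb_icc n hc.1
        obtain ⟨hv0, _⟩ := sb_icc n hc.2.1
        rw [← Lm_mediant hu0 hv0]
        exact mem_sb_succ_of_consec (consec_Lm_aux hE hD hc)
    refine ⟨hE', ?_⟩
    rintro w hw hw0 hwh
    rcases hw with hw | ⟨u, v, hc, rfl⟩
    · obtain ⟨z, hz, h⟩ := hD w hw hw0 hwh
      exact ⟨z, sb_succ_subset n hz, h⟩
    · obtain ⟨hu', hv', huv, hbet⟩ := hc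
      obtain ⟨hu0, hu1⟩ := sb_icc (n+1) hu'
      obtain ⟨hv0, hv1⟩ := sb_icc (n+1) hv'
      have hm := mediant_mem_Ioo huv
      have hvh : v ≤ 1/2 := by
        by_contra hcon
        push_neg at hcon
        exact hbet (1/2) (half_mem n) ⟨lt_of_lt_of_le hm.1 hwh, hcon⟩
      have hvpos : 0 < v := lt_trans hw0 hm.2
      obtain ⟨b, hb, hbeq⟩ := hD v hv' hvpos hvh
      have ha : ∃ a ∈ sternBrocot n, u = Lm a := by
        rcases eq_or_lt_of_le hu0 with h | h
        · exact ⟨0, zero_mem n, by rw [Lm_zero, ← h]⟩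
        · exact hD u hu' h (le_of_lt (lt_of_lt_of_le hm.1 hwh))
      obtain ⟨a, ha', haeq⟩ := ha
      obtain ⟨ha0, ha1⟩ := sb_icc n ha'
      obtain ⟨hb0, hb1⟩ := sb_icc n hb
      have hab : a < b := by
        have : Lm a < Lm b := by rw [← haeq, ← hbeq]; exact huv
        exact (Lm_lt_iff ha0 hb0).mp this
      have hcab : IsConsecutive (sternBrocot n) a b := by
        refine ⟨ha', hb, hab, ?_⟩
        rintro z hz ⟨h1, h2⟩
        obtain ⟨hz0, hz1⟩ := sb_icc n hz
        refine hbet (Lm z) (hE z hz) ⟨?_, ?_⟩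
        · rw [haeq]; exact (Lm_lt_iff ha0 hz0).mpr h1
        · rw [hbeq]; exact (Lm_lt_iff hz0 hb0).mpr h2
      refine ⟨mediant a b, mem_sb_succ_of_consec hcab, ?_⟩
      rw [haeq, hbeq, Lm_mediant ha0 hb0]

lemma Lm_mem {n : ℕ} {z : ℚ} (hz : z ∈ sternBrocot n) : Lm z ∈ sternBrocot (n+1) :=
  (Lm_mem_surj n).1 z hz

lemma consec_Lm {n : ℕ} {u v : ℚ} (h : IsConsecutive (sternBrocot n) u v) :
    IsConsecutive (sternBrocot (n+1)) (Lm u) (Lm v) :=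
  consec_Lm_aux (Lm_mem_surj n).1 (Lm_mem_surj n).2 h

lemma sg_mem : ∀ n, ∀ z ∈ sternBrocot n, 1 - z ∈ sternBrocot n := by
  intro n
  induction n with
  | zero =>
    rintro z (rfl | rfl)
    · exact Or.inr (by norm_num)
    · exact Or.inl (by norm_num)
  | succ n ih =>
    rintro z (hz | ⟨u, v, hc, rfl⟩)
    · exact Or.inl (ih z hz)
    · obtain ⟨hu', hv', huv, hbet⟩ := hc
      obtain ⟨hu0, hu1⟩ := sb_icc n hu'
      obtain ⟨hv0, hv1⟩ := sb_icc n hv'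
      have hcab : IsConsecutive (sternBrocot n) (1 - v) (1 - u) := by
        refine ⟨ih v hv', ih u hu', by linarith, ?_⟩
        rintro w hw ⟨h1, h2⟩
        refine hbet (1 - w) (ih w hw) ⟨by linarith, by linarith⟩
      rw [← sg_mediant hu0 hu1 hv0 hv1]
      exact mem_sb_succ_of_consec hcab

lemma consec_sg {n : ℕ} {u v : ℚ} (h : IsConsecutive (sternBrocot n) u v) :
    IsConsecutive (sternBrocot n) (1 - v) (1 - u) := by
  obtain ⟨hu', hv', huv, hbet⟩ := h
  refine ⟨sg_mem n v hv', sg_mem n u hu', by linarith, ?_⟩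
  rintro w hw ⟨h1, h2⟩
  refine hbet (1 - w) (sg_mem n w hw) ⟨by linarith, by linarith⟩


lemma cfVal_cons (a : ℕ) (t : List ℕ) : cfVal (a :: t) = 1 / ((a:ℚ) + cfVal t) := rfl

lemma cfVal_bounds : ∀ a : List ℕ, (∀ ai ∈ a, 1 ≤ ai) → 0 ≤ cfVal a ∧ cfVal a ≤ 1 := by
  intro a
  induction a with
  | nil => intro _; norm_num [cfVal]
  | cons a t ih =>
    intro h
    have ha : 1 ≤ a := h a (List.mem_cons_self)
    obtain ⟨h0, h1⟩ := ih (fun x hx => h x (List.mem_cons_of_mem a hx))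
    have ha' : (1:ℚ) ≤ (a:ℚ) := by exact_mod_cast ha
    have hden : (0:ℚ) < (a:ℚ) + cfVal t := by linarith
    rw [cfVal_cons]
    constructor
    · positivity
    · rw [div_le_one hden]; linarith

lemma one_sub_Lm {y : ℚ} (hy : 0 ≤ y) : 1 - Lm y = 1 / (1 + y) := by
  have h : (0:ℚ) < 1 + y := by linarith
  unfold Lm
  field_simp
  ring

lemma Lm_inv {s : ℚ} (hs : 0 < s) : Lm (1/s) = 1/(s+1) := by
  rw [Lm_div (by norm_num) hs]
  rw [add_comm]

lemma cfVal_mem : ∀ a : List ℕ, (∀ ai ∈ a, 1 ≤ ai) → ∃ n, cfVal a ∈ sternBrocot n := by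
  intro a
  induction a with
  | nil => exact fun _ => ⟨0, zero_mem 0⟩
  | cons a t ih =>
    intro h
    have ha : 1 ≤ a := h a (List.mem_cons_self)
    obtain ⟨n, hn⟩ := ih (fun x hx => h x (List.mem_cons_of_mem a hx))
    obtain ⟨hy0, hy1⟩ := cfVal_bounds t (fun x hx => h x (List.mem_cons_of_mem a hx))
    have key : ∀ m : ℕ, 1/(((m+1 : ℕ):ℚ) + cfVal t) ∈ sternBrocot (n + m + 1) := by
      intro m
      induction m with
      | zero =>
        have h1 : (((0:ℕ)+1 : ℕ) : ℚ) + cfVal t = 1 + cfVal t := by push_cast; ring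
        rw [h1, ← one_sub_Lm hy0]
        exact sg_mem (n+1) _ (Lm_mem hn)
      | succ m ihm =>
        have hs : (0:ℚ) < ((m+1:ℕ):ℚ) + cfVal t := by
          have : (1:ℚ) ≤ ((m+1:ℕ):ℚ) := by exact_mod_cast Nat.succ_le_succ (Nat.zero_le m)
          linarith
        have h2 : Lm (1/(((m+1:ℕ):ℚ) + cfVal t)) = 1/(((m+1+1:ℕ):ℚ) + cfVal t) := by
          rw [Lm_inv hs]
          congr 1
          push_cast; ring
        rw [← h2]
        exact Lm_mem ihm
    obtain ⟨m, rfl⟩ : ∃ m, a = m + 1 := ⟨a - 1, by omega⟩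
    exact ⟨n + m + 1, by rw [cfVal_cons]; exact key m⟩

section G

variable {lam : ℝ} {g : ℚ → ℝ}

lemma FE_L (hg0 : g 0 = 0) (hg1 : g 1 = 1)
    (hrec : ∀ n : ℕ, ∀ x y : ℚ, IsConsecutive (sternBrocot n) x y →
      g (mediant x y) = g x + lam * (g y - g x)) :
    ∀ n, ∀ z ∈ sternBrocot n, g (Lm z) = lam * g z := by
  intro n
  induction n with
  | zero =>
    rintro z (rfl | rfl)
    · rw [Lm_zero, hg0]; ring
    · have h := hrec 0 0 1 consec01
      rw [mediant_zero_one, hg0, hg1] at h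
      rw [Lm_one, h, hg1]; ring
  | succ n ih =>
    rintro z (hz | ⟨u, v, hc, rfl⟩)
    · exact ih z hz
    · obtain ⟨hu0, _⟩ := sb_icc n hc.1
      obtain ⟨hv0, _⟩ := sb_icc n hc.2.1
      rw [← Lm_mediant hu0 hv0, hrec (n+1) _ _ (consec_Lm hc), ih u hc.1, ih v hc.2.1,
        hrec n u v hc]
      ring

lemma dual_rec
    (hrec : ∀ n : ℕ, ∀ x y : ℚ, IsConsecutive (sternBrocot n) x y →
      g (mediant x y) = g x + lam * (g y - g x)) :
    ∀ n : ℕ, ∀ x y : ℚ, IsConsecutive (sternBrocot n) x y →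
      (fun w => 1 - g (1 - w)) (mediant x y) =
        (fun w => 1 - g (1 - w)) x +
          (1 - lam) * ((fun w => 1 - g (1 - w)) y - (fun w => 1 - g (1 - w)) x) := by
  intro n x y h
  obtain ⟨hx0, hx1⟩ := sb_icc n h.1
  obtain ⟨hy0, hy1⟩ := sb_icc n h.2.1
  have h2 := hrec n (1-y) (1-x) (consec_sg h)
  rw [sg_mediant hx0 hx1 hy0 hy1] at h2
  simp only
  rw [h2]
  ring

lemma g_cf_cons (hlam0 : 0 < lam) (hlam1 : lam < 1)
    (hg0 : g 0 = 0) (hg1 : g 1 = 1)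
    (hrec : ∀ n : ℕ, ∀ x y : ℚ, IsConsecutive (sternBrocot n) x y →
      g (mediant x y) = g x + lam * (g y - g x))
    (t : List ℕ) (ht : ∀ ai ∈ t, 1 ≤ ai) :
    ∀ a₁ : ℕ, 1 ≤ a₁ →
      g (cfVal (a₁ :: t)) = lam ^ (a₁ - 1) * (1 - (1 - lam) * (1 - g (1 - cfVal t))) := by
  obtain ⟨n, hn⟩ := cfVal_mem t ht
  obtain ⟨hy0, hy1⟩ := cfVal_bounds t ht
  have hg'0 : (fun w => 1 - g (1 - w)) (0:ℚ) = 0 := by simp [hg1]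
  have hg'1 : (fun w => 1 - g (1 - w)) (1:ℚ) = 1 := by simp [hg0]
  intro a₁ ha
  induction a₁, ha using Nat.le_induction with
  | base =>
    have h1 : cfVal ((1:ℕ) :: t) = 1 - Lm (cfVal t) := by
      rw [cfVal_cons, one_sub_Lm hy0]
      norm_num
    have h2 := FE_L (lam := 1 - lam) (g := fun w => 1 - g (1 - w)) hg'0 hg'1 (dual_rec hrec) n (cfVal t) hn
    rw [h1]
    have h3 : g (1 - Lm (cfVal t)) = 1 - (1 - lam) * (1 - g (1 - cfVal t)) := by
      have := h2
      linarith [h2]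
    rw [h3]
    norm_num
  | succ a₁ ha₁ ih =>
    have hall : ∀ x ∈ (a₁ :: t), 1 ≤ x := by
      intro x hx
      rcases List.mem_cons.mp hx with rfl | hx
      · exact ha₁
      · exact ht x hx
    obtain ⟨m, hm⟩ := cfVal_mem (a₁ :: t) hall
    have hs : (0:ℚ) < (a₁:ℚ) + cfVal t := by
      have : (1:ℚ) ≤ (a₁:ℚ) := by exact_mod_cast ha₁
      linarith
    have h1 : cfVal ((a₁+1) :: t) = Lm (cfVal (a₁ :: t)) := by
      rw [cfVal_cons, cfVal_cons, Lm_inv hs]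
      congr 1
      push_cast; ring
    rw [h1, FE_L hg0 hg1 hrec m _ hm, ih]
    have e : a₁ + 1 - 1 = (a₁ - 1) + 1 := by omega
    rw [e, pow_succ]
    ring

end G


noncomputable def Sval (lam : ℝ) (a : List ℕ) : ℝ :=
  ∑ j ∈ Finset.range a.length,
    (-1 : ℝ) ^ j *
      lam ^ ((∑ i ∈ (Finset.range (j + 1)).filter (fun i => i % 2 = 0), a.getD i 0) - 1) *
      (1 - lam) ^ (∑ i ∈ (Finset.range (j + 1)).filter (fun i => i % 2 = 1), a.getD i 0)

lemma even_sum_shift (a₁ : ℕ) (t : List ℕ) (j : ℕ) :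
    ∑ i ∈ (Finset.range (j + 1 + 1)).filter (fun i => i % 2 = 0), (a₁ :: t).getD i 0 =
      a₁ + ∑ i ∈ (Finset.range (j + 1)).filter (fun i => i % 2 = 1), t.getD i 0 := by
  rw [Finset.sum_filter, Finset.sum_filter, Finset.sum_range_succ']
  have h2 : ∀ x ∈ Finset.range (j + 1),
      (if (x + 1) % 2 = 0 then (a₁ :: t).getD (x + 1) 0 else 0) =
        (if x % 2 = 1 then t.getD x 0 else 0) := by
    intro i _
    rw [List.getD_cons_succ]
    by_cases h : i % 2 = 1
    · rw [if_pos (by omega : (i + 1) % 2 = 0), if_pos h]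
    · rw [if_neg (by omega : ¬ (i + 1) % 2 = 0), if_neg h]
  rw [Finset.sum_congr rfl h2, List.getD_cons_zero, if_pos (by norm_num : (0:ℕ) % 2 = 0),
    add_comm]

lemma odd_sum_shift (a₁ : ℕ) (t : List ℕ) (j : ℕ) :
    ∑ i ∈ (Finset.range (j + 1 + 1)).filter (fun i => i % 2 = 1), (a₁ :: t).getD i 0 =
      ∑ i ∈ (Finset.range (j + 1)).filter (fun i => i % 2 = 0), t.getD i 0 := by
  rw [Finset.sum_filter, Finset.sum_filter, Finset.sum_range_succ']
  have h2 : ∀ x ∈ Finset.range (j + 1),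
      (if (x + 1) % 2 = 1 then (a₁ :: t).getD (x + 1) 0 else 0) =
        (if x % 2 = 0 then t.getD x 0 else 0) := by
    intro i _
    rw [List.getD_cons_succ]
    by_cases h : i % 2 = 0
    · rw [if_pos (by omega : (i + 1) % 2 = 1), if_pos h]
    · rw [if_neg (by omega : ¬ (i + 1) % 2 = 1), if_neg h]
  rw [Finset.sum_congr rfl h2, if_neg (by norm_num : ¬ (0:ℕ) % 2 = 1), add_zero]

lemma one_le_even_sum {t : List ℕ} (ht : ∀ x ∈ t, 1 ≤ x) {j : ℕ} (hj : j < t.length) :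
    1 ≤ ∑ i ∈ (Finset.range (j + 1)).filter (fun i => i % 2 = 0), t.getD i 0 := by
  have h0 : 0 ∈ (Finset.range (j + 1)).filter (fun i => i % 2 = 0) := by
    simp
  have h1 : 1 ≤ t.getD 0 0 := by
    cases t with
    | nil => simp at hj
    | cons h t' => simpa using ht h (List.mem_cons_self)
  exact le_trans h1
    (Finset.single_le_sum (f := fun i => t.getD i 0) (fun i _ => Nat.zero_le _) h0)

lemma Sval_cons (lam : ℝ) {a₁ : ℕ} (h1 : 1 ≤ a₁) {t : List ℕ} (ht : ∀ x ∈ t, 1 ≤ x) :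
    Sval lam (a₁ :: t) = lam ^ (a₁ - 1) * (1 - (1 - lam) * Sval (1 - lam) t) := by
  have hdual : Sval (1 - lam) t =
      ∑ j ∈ Finset.range t.length,
        (-1 : ℝ) ^ j *
          (1 - lam) ^ ((∑ i ∈ (Finset.range (j + 1)).filter (fun i => i % 2 = 0), t.getD i 0) - 1) *
          lam ^ (∑ i ∈ (Finset.range (j + 1)).filter (fun i => i % 2 = 1), t.getD i 0) := by
    unfold Sval
    apply Finset.sum_congr rfl
    intro j _
    rw [show (1:ℝ) - (1 - lam) = lam by ring]
  have hterm : ∀ j ∈ Finset.range t.length,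
      (-1 : ℝ) ^ (j + 1) *
          lam ^ ((∑ i ∈ (Finset.range (j + 1 + 1)).filter (fun i => i % 2 = 0), (a₁ :: t).getD i 0) - 1) *
          (1 - lam) ^ (∑ i ∈ (Finset.range (j + 1 + 1)).filter (fun i => i % 2 = 1), (a₁ :: t).getD i 0)
        = (lam ^ (a₁ - 1) * (-(1 - lam))) *
          ((-1 : ℝ) ^ j *
            (1 - lam) ^ ((∑ i ∈ (Finset.range (j + 1)).filter (fun i => i % 2 = 0), t.getD i 0) - 1) *
            lam ^ (∑ i ∈ (Finset.range (j + 1)).filter (fun i => i % 2 = 1), t.getD i 0)) := by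
    intro j hj
    rw [even_sum_shift, odd_sum_shift]
    have hE := one_le_even_sum ht (Finset.mem_range.mp hj)
    set E := ∑ i ∈ (Finset.range (j + 1)).filter (fun i => i % 2 = 0), t.getD i 0 with hEdef
    set O := ∑ i ∈ (Finset.range (j + 1)).filter (fun i => i % 2 = 1), t.getD i 0 with hOdef
    rw [show a₁ + O - 1 = (a₁ - 1) + O by omega]
    conv_lhs => rw [show E = (E - 1) + 1 by omega]
    rw [pow_add, pow_add, pow_add, pow_one, pow_one]
    ring
  conv_lhs => rw [Sval]
  simp only [List.length_cons]
  rw [Finset.sum_range_succ']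
  rw [Finset.sum_congr rfl hterm, ← Finset.mul_sum, ← hdual]
  have hF0 : (-1 : ℝ) ^ 0 *
      lam ^ ((∑ i ∈ (Finset.range (0 + 1)).filter (fun i => i % 2 = 0), (a₁ :: t).getD i 0) - 1) *
      (1 - lam) ^ (∑ i ∈ (Finset.range (0 + 1)).filter (fun i => i % 2 = 1), (a₁ :: t).getD i 0)
      = lam ^ (a₁ - 1) := by
    norm_num [Finset.range_one, Finset.filter_singleton]
  rw [hF0]
  ring


lemma main_formula : ∀ N : ℕ, ∀ lam : ℝ, 0 < lam → lam < 1 →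
    ∀ g : ℚ → ℝ, g 0 = 0 → g 1 = 1 →
    (∀ n : ℕ, ∀ x y : ℚ, IsConsecutive (sternBrocot n) x y →
      g (mediant x y) = g x + lam * (g y - g x)) →
    ∀ a : List ℕ, (∀ ai ∈ a, 1 ≤ ai) → a.sum ≤ N → g (cfVal a) = Sval lam a := by
  intro N
  induction N with
  | zero =>
    intro lam _ _ g hg0 hg1 _ a ha hsum
    have hnil : a = [] := by
      cases a with
      | nil => rfl
      | cons x t =>
        have h1 := ha x (List.mem_cons_self)
        have h2 : x + t.sum ≤ 0 := by simpa using hsum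
        omega
    subst hnil
    rw [show cfVal [] = 0 from rfl, hg0, Sval]
    simp
  | succ N IH =>
    intro lam hl0 hl1 g hg0 hg1 hrec a ha hsum
    cases a with
    | nil =>
      rw [show cfVal [] = 0 from rfl, hg0, Sval]
      simp
    | cons a₁ t =>
      have ha₁ : 1 ≤ a₁ := ha a₁ (List.mem_cons_self)
      have ht : ∀ x ∈ t, 1 ≤ x := fun x hx => ha x (List.mem_cons_of_mem a₁ hx)
      have hg'0 : (fun w => 1 - g (1 - w)) (0:ℚ) = 0 := by simp [hg1]
      have hg'1 : (fun w => 1 - g (1 - w)) (1:ℚ) = 1 := by simp [hg0]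
      have hIH : (fun w => 1 - g (1 - w)) (cfVal t) = Sval (1 - lam) t := by
        apply IH (1 - lam) (by linarith) (by linarith) (fun w => 1 - g (1 - w)) hg'0 hg'1 (dual_rec hrec) t ht
        have h2 : a₁ + t.sum ≤ N + 1 := by simpa using hsum
        omega
      simp only at hIH
      have hmain := g_cf_cons hl0 hl1 hg0 hg1 hrec t ht a₁ ha₁
      rw [hmain, Sval_cons lam ha₁ ht, hIH]

end TU

/-- Salem-type formula for `g_λ` at rationals, together with the
particular case `g_λ(1/a₁) = λ^(a₁ - 1)`. -/
theorem tichyUitz_salem_formula_rational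
    (lam : ℝ) (hlam : lam ∈ Set.Ioo (0 : ℝ) 1)
    (g : ℚ → ℝ)
    (hg0 : g 0 = 0) (hg1 : g 1 = 1)
    (hrec : ∀ n : ℕ, ∀ x y : ℚ, IsConsecutive (sternBrocot n) x y →
      g (mediant x y) = g x + lam * (g y - g x))
    (x : ℚ) (hx : x ∈ Set.Ioo (0 : ℚ) 1)
    (a : List ℕ) (ha : IsCF x a) :
    g x = ∑ j ∈ Finset.range a.length,
        (-1 : ℝ) ^ j *
          lam ^ ((∑ i ∈ (Finset.range (j + 1)).filter (fun i => i % 2 = 0),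
                    a.getD i 0) - 1) *
          (1 - lam) ^ (∑ i ∈ (Finset.range (j + 1)).filter (fun i => i % 2 = 1),
                    a.getD i 0)
      ∧ ∀ a₁ : ℕ, 2 ≤ a₁ → g (1 / (a₁ : ℚ)) = lam ^ (a₁ - 1) := by
  obtain ⟨hl0, hl1⟩ := hlam
  obtain ⟨hpos, hlast, hxval⟩ := ha
  constructor
  · rw [hxval, TU.main_formula a.sum lam hl0 hl1 g hg0 hg1 hrec a hpos le_rfl, TU.Sval]
  · intro a₁ h2
    have hform := TU.main_formula a₁ lam hl0 hl1 g hg0 hg1 hrec [a₁]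
      (by intro y hy; simp at hy; omega) (by simp)
    have hv : cfVal [a₁] = 1 / (a₁ : ℚ) := by
      rw [TU.cfVal_cons]
      norm_num [cfVal]
    have hS : TU.Sval lam [a₁] = lam ^ (a₁ - 1) := by
      rw [TU.Sval]
      norm_num [Finset.range_one, Finset.filter_singleton]
    rw [← hv, hform, hS]
end

section
/- Let λ ∈ (0,1) and let x ∈ (0,1) be irrational with regular continued fraction expansion x = [0; a_1, a_2, …] (an infinite sequence of positive integers). Then the series Σ_{j≥1} (−1)^{j+1} · λ^{(Σ_{1≤i≤j, i odd} a_i) − 1} · (1−λ)^{Σ_{1≤i≤j, i even} a_i} converges and its sum equals g_λ(x). -/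
open Set Filter

/-! ### Auxiliary development -/

namespace SalemAux

lemma den_cast_pos (x : ℚ) : (0:ℚ) < (x.den : ℚ) := by exact_mod_cast x.pos

lemma lt_iff_cross (x y : ℚ) : x < y ↔ x.num * y.den < y.num * x.den := by
  conv_lhs => rw [← Rat.num_div_den x, ← Rat.num_div_den y]
  rw [div_lt_div_iff₀ (den_cast_pos x) (den_cast_pos y)]
  constructor
  · intro h; exact_mod_cast h
  · intro h; exact_mod_cast h

lemma le_iff_cross (x y : ℚ) : x ≤ y ↔ x.num * y.den ≤ y.num * x.den := by
  rw [← not_lt, ← not_lt, not_iff_not, lt_iff_cross]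

/-- A unimodular pair. -/
def Uni (x y : ℚ) : Prop := y.num * x.den - x.num * y.den = 1

lemma Uni.lt {x y : ℚ} (h : Uni x y) : x < y := by
  rw [lt_iff_cross]; unfold Uni at h; linarith

lemma mediant_between {x y : ℚ} (hxy : x < y) :
    x < mediant x y ∧ mediant x y < y := by
  have hx := den_cast_pos x
  have hy := den_cast_pos y
  have hcross : (x.num : ℚ) * y.den < (y.num : ℚ) * x.den := by
    exact_mod_cast (lt_iff_cross x y).1 hxy
  have hsum : (0:ℚ) < ((x.den + y.den : ℕ) : ℚ) := by push_cast; linarith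
  constructor
  · rw [mediant]
    conv_lhs => rw [← Rat.num_div_den x]
    rw [div_lt_div_iff₀ (den_cast_pos x) hsum]
    push_cast; nlinarith
  · rw [mediant]
    conv_rhs => rw [← Rat.num_div_den y]
    rw [div_lt_div_iff₀ hsum (den_cast_pos y)]
    push_cast; nlinarith

lemma consecutive_mediant {n : ℕ} {x z : ℚ}
    (h : IsConsecutive (sternBrocot n) x z) :
    IsConsecutive (sternBrocot (n+1)) x (mediant x z) ∧
      IsConsecutive (sternBrocot (n+1)) (mediant x z) z := by
  obtain ⟨hx, hz, hlt, hno⟩ := h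
  have hbtw := mediant_between hlt
  have hmem : mediant x z ∈ sternBrocot (n+1) :=
    Or.inr ⟨x, z, ⟨hx, hz, hlt, hno⟩, rfl⟩
  have key : ∀ t ∈ sternBrocot (n+1), x < t → t < z → t = mediant x z := by
    rintro t (ht | ⟨u, v, huv, rfl⟩) h1 h2
    · exact absurd ⟨h1, h2⟩ (hno t ht)
    · have hb2 := mediant_between huv.2.2.1
      have hux : u = x := by
        rcases lt_trichotomy u x with hc | hc | hc
        · exfalso
          rcases lt_trichotomy v z with hv | hv | hv
          · exact huv.2.2.2 x hx ⟨hc, by linarith [hb2.2]⟩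
          · exact huv.2.2.2 x hx ⟨hc, by rw [hv]; exact hlt⟩
          · exact huv.2.2.2 x hx ⟨hc, by linarith [hb2.1]⟩
        · exact hc
        · exact absurd ⟨hc, by linarith [hb2.1]⟩ (hno u huv.1)
      have hvz : v = z := by
        rcases lt_trichotomy v z with hc | hc | hc
        · exact absurd ⟨by linarith [hb2.2], hc⟩ (hno v huv.2.1)
        · exact hc
        · exfalso
          rcases lt_trichotomy u x with hu | hu | hu
          · exact huv.2.2.2 x hx ⟨hu, by linarith [hb2.1]⟩
          · exact huv.2.2.2 z hz ⟨by rw [hu]; exact hlt, hc⟩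
          · exact huv.2.2.2 z hz ⟨by linarith [hb2.1], hc⟩
      rw [hux, hvz]
  constructor
  · refine ⟨Or.inl hx, hmem, hbtw.1, ?_⟩
    rintro t ht ⟨h1, h2⟩
    have := key t ht h1 (h2.trans hbtw.2)
    rw [this] at h2; exact lt_irrefl _ h2
  · refine ⟨hmem, Or.inl hz, hbtw.2, ?_⟩
    rintro t ht ⟨h1, h2⟩
    have := key t ht (hbtw.1.trans h1) h2
    rw [this] at h1; exact lt_irrefl _ h1

end SalemAux
namespace SalemAux

lemma lt_one_iff (x : ℚ) : x < 1 ↔ x.num < x.den := by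
  rw [lt_iff_cross]; norm_num

lemma exists_consecutive_aux :
    ∀ N (u v : ℚ), u.den + v.den ≤ N → 0 ≤ u → v ≤ 1 → Uni u v →
      ∃ n, IsConsecutive (sternBrocot n) u v := by
  intro N
  induction N with
  | zero =>
    intro u v h _ _ _
    have := u.pos; have := v.pos; omega
  | succ N ih =>
    intro u v hN hu hv huni
    have hulv : u < v := huni.lt
    have hupos := u.pos
    have hvpos := v.pos
    rcases lt_trichotomy u.den v.den with hdlt | hdeq | hdgt
    · -- v = mediant u w
      set p : ℤ := v.num - u.num with hp
      set q : ℤ := (v.den : ℤ) - (u.den : ℤ) with hq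
      have hd : (0:ℤ) < q := by simp [hq]; exact_mod_cast hdlt
      have heq1 : p * u.den - u.num * q = 1 := by
        simp only [hp, hq]; unfold Uni at huni; ring_nf; ring_nf at huni; linarith
      have hcop : Nat.Coprime p.natAbs q.natAbs := by
        have hdvd : (Int.gcd p q : ℤ) ∣ 1 := by
          rw [← heq1]
          exact dvd_sub ((Int.gcd_dvd_left p q).mul_right _) ((Int.gcd_dvd_right p q).mul_left _)
        have : Int.gcd p q ∣ 1 := by exact_mod_cast hdvd
        exact Nat.dvd_one.mp this
      set w : ℚ := (p:ℚ)/(q:ℚ) with hw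
      have hwnum : w.num = p := Rat.num_div_eq_of_coprime hd hcop
      have hwden : (w.den : ℤ) = q := Rat.den_div_eq_of_coprime hd hcop
      have huw : Uni u w := by unfold Uni; rw [hwnum, hwden]; exact heq1
      have hu1 : u.num < u.den := (lt_one_iff u).1 (lt_of_lt_of_le hulv hv)
      have hunum : 0 ≤ u.num := Rat.num_nonneg.mpr hu
      have hw1 : w ≤ 1 := by
        rw [le_iff_cross, hwnum]
        norm_num
        by_contra hc
        push_neg at hc
        have hc' : q + 1 ≤ p := by
          have := hwden; omega
        nlinarith [heq1, hd, u.pos]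
      have hdw : u.den + w.den ≤ N := by
        have := u.pos; omega
      obtain ⟨n, hcons⟩ := ih u w hdw hu hw1 huw
      have hveq : v = mediant u w := by
        rw [mediant]
        have h1 : ((u.num + w.num : ℤ):ℚ) = (v.num:ℚ) := by
          rw [hwnum]; push_cast [hp]; ring
        have h2 : ((u.den + w.den : ℕ):ℚ) = (v.den:ℚ) := by
          have : (u.den : ℤ) + (w.den : ℤ) = (v.den : ℤ) := by omega
          exact_mod_cast congrArg (fun t : ℤ => (t:ℚ)) this
        rw [h1, h2, Rat.num_div_den]
      exact ⟨n+1, hveq ▸ (consecutive_mediant hcons).1⟩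
    · -- u = 0, v = 1
      have h1 : (v.num - u.num) * (u.den:ℤ) = 1 := by
        unfold Uni at huni; rw [← hdeq] at huni; linarith [huni]
      have hden1 : u.den = 1 := by
        have : (u.den:ℤ) ∣ 1 := Dvd.intro_left _ h1
        have : u.den ∣ 1 := by exact_mod_cast this
        exact Nat.dvd_one.mp this
      have hunum : 0 ≤ u.num := Rat.num_nonneg.mpr hu
      have hv1 : v.num ≤ v.den := by
        have := (le_iff_cross v 1).1 hv; norm_num at this; exact this
      have hvd : v.den = 1 := by omega
      have h2 : v.num - u.num = 1 := by rw [hden1] at h1; simpa using h1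
      have hu0 : u.num = 0 := by omega
      have hvn1 : v.num = 1 := by omega
      have hu' : u = 0 := by
        rw [← Rat.num_div_den u, hu0]; norm_num
      have hv' : v = 1 := by
        rw [← Rat.num_div_den v, hvn1, hvd]; norm_num
      refine ⟨0, ?_⟩
      rw [hu', hv']
      refine ⟨Or.inl rfl, Or.inr rfl, by norm_num, ?_⟩
      rintro z (rfl | rfl) ⟨hz1, hz2⟩
      · exact lt_irrefl _ hz1
      · exact lt_irrefl _ hz2
    · -- u = mediant w v
      set p : ℤ := u.num - v.num with hp
      set q : ℤ := (u.den : ℤ) - (v.den : ℤ) with hq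
      have hd : (0:ℤ) < q := by simp [hq]; exact_mod_cast hdgt
      have heq1 : v.num * q - p * v.den = 1 := by
        simp only [hp, hq]; unfold Uni at huni; ring_nf; ring_nf at huni; linarith
      have hcop : Nat.Coprime p.natAbs q.natAbs := by
        have hdvd : (Int.gcd p q : ℤ) ∣ 1 := by
          rw [← heq1]
          exact dvd_sub ((Int.gcd_dvd_right p q).mul_left _) ((Int.gcd_dvd_left p q).mul_right _)
        have : Int.gcd p q ∣ 1 := by exact_mod_cast hdvd
        exact Nat.dvd_one.mp this
      set w : ℚ := (p:ℚ)/(q:ℚ) with hw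
      have hwnum : w.num = p := Rat.num_div_eq_of_coprime hd hcop
      have hwden : (w.den : ℤ) = q := Rat.den_div_eq_of_coprime hd hcop
      have hwv : Uni w v := by unfold Uni; rw [hwnum, hwden]; exact heq1
      have hvnum : 0 < v.num := Rat.num_pos.mpr (lt_of_le_of_lt hu hulv)
      have hw0 : 0 ≤ w := by
        rw [← Rat.num_nonneg, hwnum]
        by_contra hc
        push_neg at hc
        have hc' : p ≤ -1 := by omega
        nlinarith [heq1, hd, v.pos]
      have hdw : w.den + v.den ≤ N := by
        have := v.pos; omega
      obtain ⟨n, hcons⟩ := ih w v hdw hw0 hv hwv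
      have hueq : u = mediant w v := by
        rw [mediant]
        have h1 : ((w.num + v.num : ℤ):ℚ) = (u.num:ℚ) := by
          rw [hwnum]; push_cast [hp]; ring
        have h2 : ((w.den + v.den : ℕ):ℚ) = (u.den:ℚ) := by
          have : (w.den : ℤ) + (v.den : ℤ) = (u.den : ℤ) := by omega
          exact_mod_cast congrArg (fun t : ℤ => (t:ℚ)) this
        rw [h1, h2, Rat.num_div_den]
      exact ⟨n+1, hueq ▸ (consecutive_mediant hcons).2⟩

lemma exists_consecutive {u v : ℚ} (hu : 0 ≤ u) (hv : v ≤ 1) (huni : Uni u v) :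
    ∃ n, IsConsecutive (sternBrocot n) u v :=
  exists_consecutive_aux (u.den + v.den) u v le_rfl hu hv huni

end SalemAux
namespace SalemAux

/-- Numerators of the convergents (shifted: `cP a 0 = 1, cP a 1 = 0`). -/
def cP (a : ℕ → ℕ) : ℕ → ℕ
  | 0 => 1
  | 1 => 0
  | (n+2) => a n * cP a (n+1) + cP a n

/-- Denominators of the convergents (shifted: `cQ a 0 = 0, cQ a 1 = 1`). -/
def cQ (a : ℕ → ℕ) : ℕ → ℕ
  | 0 => 0
  | 1 => 1
  | (n+2) => a n * cQ a (n+1) + cQ a n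

variable {a : ℕ → ℕ}

lemma cP_rec' (a : ℕ → ℕ) (n : ℕ) : cP a (n+2) = a n * cP a (n+1) + cP a n := by rw [cP]

lemma cQ_rec' (a : ℕ → ℕ) (n : ℕ) : cQ a (n+2) = a n * cQ a (n+1) + cQ a n := by rw [cQ]

lemma cQ_pos (ha : ∀ i, 1 ≤ a i) : ∀ n, 1 ≤ cQ a (n+1) := by
  intro n
  induction n with
  | zero => simp [cQ]
  | succ n ih =>
    rw [show n+1+1 = n+2 from rfl, cQ_rec']
    have := ha n
    nlinarith

lemma det_eq : ∀ n, (cP a (n+1) : ℤ) * cQ a n - cP a n * cQ a (n+1) = (-1)^(n+1) := by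
  intro n
  induction n with
  | zero => simp [cP, cQ]
  | succ n ih =>
    rw [show n+1+1 = n+2 from rfl, cP, cQ]
    push_cast
    rw [pow_succ]
    linear_combination (-1 : ℤ) * ih

lemma cP_le_cQ (ha : ∀ i, 1 ≤ a i) : ∀ n, cP a (n+1) ≤ cQ a (n+1) := by
  have key : ∀ n, cP a (n+1) ≤ cQ a (n+1) ∧ cP a (n+2) ≤ cQ a (n+2) := by
    intro n
    induction n with
    | zero =>
      refine ⟨by simp [cP, cQ], ?_⟩
      have := ha 0
      simp [cP, cQ]; omega
    | succ n ih =>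
      refine ⟨ih.2, ?_⟩
      rw [show n+1+2 = n+3 from rfl, cP, cQ]
      have h1 := ih.1; have h2 := ih.2
      have := ha (n+1)
      nlinarith
  exact fun n => (key n).1

/-- numerator and denominator of a finite continued fraction, by head recursion. -/
def cfP : List ℕ → ℕ × ℕ
  | [] => (0, 1)
  | x :: t => ((cfP t).2, x * (cfP t).2 + (cfP t).1)

lemma cfP_den_pos : ∀ l : List ℕ, (∀ x ∈ l, 1 ≤ x) → 1 ≤ (cfP l).2 := by
  intro l
  induction l with
  | nil => intro _; simp [cfP]
  | cons x t ih =>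
    intro h
    have hx : 1 ≤ x := h x List.mem_cons_self
    have ht := ih (fun y hy => h y (List.mem_cons_of_mem x hy))
    simp only [cfP]
    nlinarith

lemma cfVal_eq_cfP : ∀ l : List ℕ, (∀ x ∈ l, 1 ≤ x) →
    cfVal l = ((cfP l).1 : ℚ) / ((cfP l).2 : ℚ) := by
  intro l
  induction l with
  | nil => intro _; simp [cfVal, cfP]
  | cons x t ih =>
    intro h
    have hx : 1 ≤ x := h x List.mem_cons_self
    have ht := cfP_den_pos t (fun y hy => h y (List.mem_cons_of_mem x hy))
    have hD : (0:ℚ) < ((cfP t).2 : ℚ) := by exact_mod_cast ht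
    have hxQ : (1:ℚ) ≤ (x:ℚ) := by exact_mod_cast hx
    rw [cfVal, ih (fun y hy => h y (List.mem_cons_of_mem x hy))]
    have hstep : (x:ℚ) + ((cfP t).1:ℚ)/((cfP t).2:ℚ)
        = ((x*(cfP t).2 + (cfP t).1 : ℕ):ℚ)/((cfP t).2:ℚ) := by
      push_cast; field_simp
    rw [hstep, one_div_div]
    simp only [cfP]

lemma cP_rec (a : ℕ → ℕ) (n : ℕ) : cP a (n+2) = a n * cP a (n+1) + cP a n := by rw [cP]

lemma cQ_rec (a : ℕ → ℕ) (n : ℕ) : cQ a (n+2) = a n * cQ a (n+1) + cQ a n := by rw [cQ]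

lemma shift_lemma : ∀ m (a : ℕ → ℕ),
    cP a (m+2) = cQ (fun i => a (i+1)) (m+1) ∧
    cQ a (m+2) = a 0 * cQ (fun i => a (i+1)) (m+1) + cP (fun i => a (i+1)) (m+1) := by
  have key : ∀ m (a : ℕ → ℕ),
      (cP a (m+2) = cQ (fun i => a (i+1)) (m+1) ∧
       cQ a (m+2) = a 0 * cQ (fun i => a (i+1)) (m+1) + cP (fun i => a (i+1)) (m+1)) ∧
      (cP a (m+3) = cQ (fun i => a (i+1)) (m+2) ∧
       cQ a (m+3) = a 0 * cQ (fun i => a (i+1)) (m+2) + cP (fun i => a (i+1)) (m+2)) := by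
    intro m
    induction m with
    | zero =>
      intro a
      refine ⟨⟨?_, ?_⟩, ?_, ?_⟩ <;> simp [cP, cQ, cP_rec, cQ_rec] <;> ring
    | succ m ih =>
      intro a
      obtain ⟨⟨hP1, hQ1⟩, hP2, hQ2⟩ := ih a
      refine ⟨⟨hP2, hQ2⟩, ?_, ?_⟩
      · show cP a (m+2+2) = cQ (fun i => a (i+1)) (m+1+2)
        rw [cP_rec a (m+2), cQ_rec (fun i => a (i+1)) (m+1),
          show m+2+1 = m+3 from rfl, show m+1+1 = m+2 from rfl, hP2, hP1]
      · show cQ a (m+2+2) = _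
        rw [cQ_rec a (m+2), show m+2+1 = m+3 from rfl, hQ2, hQ1,
          show m+1+2 = m+3 from rfl, cQ_rec (fun i => a (i+1)) (m+1),
          cP_rec (fun i => a (i+1)) (m+1), show m+1+1 = m+2 from rfl]
        ring
  intro m a
  exact (key m a).1

lemma cfP_ofFn : ∀ m (a : ℕ → ℕ),
    cfP (List.ofFn (fun i : Fin m => a i)) = (cP a (m+1), cQ a (m+1)) := by
  intro m
  induction m with
  | zero => intro a; simp [cfP, cP, cQ]
  | succ m ih =>
    intro a
    rw [List.ofFn_succ]
    simp only [Fin.val_succ, Fin.val_zero]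
    rw [show (cfP (a 0 :: List.ofFn fun i : Fin m => a (i.val + 1))) =
      (((cfP (List.ofFn fun i : Fin m => a (i.val + 1))).2),
        a 0 * (cfP (List.ofFn fun i : Fin m => a (i.val + 1))).2 +
          (cfP (List.ofFn fun i : Fin m => a (i.val + 1))).1) from rfl]
    rw [ih (fun i => a (i+1))]
    have hs := shift_lemma m a
    rw [show m+1+1 = m+2 from rfl, hs.1, hs.2]

end SalemAux
namespace SalemAux

/-- Intermediate fractions in block `m` of the Stern–Brocot walk. -/
def rr (a : ℕ → ℕ) (m k : ℕ) : ℚ :=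
  ((cP a m + k * cP a (m+1) : ℕ) : ℚ) / ((cQ a m + k * cQ a (m+1) : ℕ) : ℚ)

/-- The convergents. -/
def Cv (a : ℕ → ℕ) (m : ℕ) : ℚ := ((cP a (m+1) : ℕ) : ℚ) / ((cQ a (m+1) : ℕ) : ℚ)

variable {a : ℕ → ℕ}

lemma Cv_eq_rr (m : ℕ) : Cv a m = rr a m.succ 0 := by
  simp [Cv, rr]

lemma rr_den_pos (ha : ∀ i, 1 ≤ a i) {m k : ℕ} (h : 1 ≤ m ∨ 1 ≤ k) :
    1 ≤ cQ a m + k * cQ a (m+1) := by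
  rcases h with h | h
  · obtain ⟨m', rfl⟩ := Nat.exists_eq_add_of_le' h
    have := cQ_pos ha m'
    omega
  · have := cQ_pos ha m
    nlinarith

lemma rr_num_le_den (ha : ∀ i, 1 ≤ a i) {m k : ℕ} (h : 1 ≤ m ∨ 1 ≤ k) :
    cP a m + k * cP a (m+1) ≤ cQ a m + k * cQ a (m+1) := by
  have main : 1 ≤ m → cP a m + k * cP a (m+1) ≤ cQ a m + k * cQ a (m+1) := by
    intro hm
    obtain ⟨m', rfl⟩ := Nat.exists_eq_add_of_le' hm
    have h1 := cP_le_cQ ha m'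
    have h2 := cP_le_cQ ha (m'+1)
    nlinarith
  rcases h with h | h
  · exact main h
  · rcases Nat.eq_zero_or_pos m with rfl | hm
    · simp [cP, cQ]; omega
    · exact main hm

lemma rr_coprime (m k : ℕ) :
    Nat.Coprime (cP a m + k * cP a (m+1)) (cQ a m + k * cQ a (m+1)) := by
  set N := cP a m + k * cP a (m+1) with hN
  set D := cQ a m + k * cQ a (m+1) with hD
  set d := Nat.gcd N D with hdd
  have h1 : (d:ℤ) ∣ (N:ℤ) := Int.natCast_dvd_natCast.mpr (Nat.gcd_dvd_left _ _)
  have h2 : (d:ℤ) ∣ (D:ℤ) := Int.natCast_dvd_natCast.mpr (Nat.gcd_dvd_right _ _)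
  have hdet := det_eq (a := a) m
  have hc : (N:ℤ) * cQ a (m+1) - (cP a (m+1):ℤ) * D = -(-1)^(m+1) := by
    push_cast [hN, hD]
    linear_combination (-1:ℤ) * hdet
  have hdvd : (d:ℤ) ∣ -(-1)^(m+1) := by
    rw [← hc]
    exact dvd_sub (h1.mul_right _) (h2.mul_left _)
  have : (d:ℤ) ∣ 1 := by
    rcases Nat.even_or_odd (m+1) with he | ho
    · rw [he.neg_one_pow] at hdvd; exact (dvd_neg.mp hdvd)
    · rw [ho.neg_one_pow] at hdvd; simpa using hdvd
  have : d ∣ 1 := by exact_mod_cast this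
  exact Nat.dvd_one.mp this

lemma rr_num (ha : ∀ i, 1 ≤ a i) {m k : ℕ} (h : 1 ≤ m ∨ 1 ≤ k) :
    (rr a m k).num = (cP a m + k * cP a (m+1) : ℕ) := by
  set N := cP a m + k * cP a (m+1) with hN
  set D := cQ a m + k * cQ a (m+1) with hD
  have hpos : (0:ℤ) < ((D:ℕ):ℤ) := by exact_mod_cast rr_den_pos ha h
  have hcop := rr_coprime (a := a) m k
  have hrw : rr a m k = (((N:ℕ):ℤ):ℚ) / (((D:ℕ):ℤ):ℚ) := by
    rw [rr, Int.cast_natCast, Int.cast_natCast]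
  rw [hrw, Rat.num_div_eq_of_coprime (a := ((N:ℕ):ℤ)) hpos (by simpa using hcop)]

lemma rr_den (ha : ∀ i, 1 ≤ a i) {m k : ℕ} (h : 1 ≤ m ∨ 1 ≤ k) :
    (rr a m k).den = cQ a m + k * cQ a (m+1) := by
  set N := cP a m + k * cP a (m+1) with hN
  set D := cQ a m + k * cQ a (m+1) with hD
  have hpos : (0:ℤ) < ((D:ℕ):ℤ) := by exact_mod_cast rr_den_pos ha h
  have hcop := rr_coprime (a := a) m k
  have hrw : rr a m k = (((N:ℕ):ℤ):ℚ) / (((D:ℕ):ℤ):ℚ) := by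
    rw [rr, Int.cast_natCast, Int.cast_natCast]
  have h2 := Rat.den_div_eq_of_coprime (a := ((N:ℕ):ℤ)) hpos (by simpa using hcop)
  rw [← hrw] at h2
  exact_mod_cast h2

lemma Cv_num (ha : ∀ i, 1 ≤ a i) (m : ℕ) : (Cv a m).num = (cP a (m+1) : ℕ) := by
  rw [Cv_eq_rr, rr_num ha (Or.inl (Nat.le_add_left 1 m))]
  simp

lemma Cv_den (ha : ∀ i, 1 ≤ a i) (m : ℕ) : (Cv a m).den = cQ a (m+1) := by
  rw [Cv_eq_rr, rr_den ha (Or.inl (Nat.le_add_left 1 m))]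
  simp

lemma uni_even (ha : ∀ i, 1 ≤ a i) {m k : ℕ} (hm : m % 2 = 0) (h : 1 ≤ m ∨ 1 ≤ k) :
    Uni (Cv a m) (rr a m k) := by
  unfold Uni
  rw [rr_num ha h, rr_den ha h, Cv_num ha m, Cv_den ha m]
  have hdet := det_eq (a := a) m
  have hodd : Odd (m+1) := by rw [Nat.odd_iff]; omega
  rw [hodd.neg_one_pow] at hdet
  push_cast
  linear_combination (-1:ℤ) * hdet

lemma uni_odd (ha : ∀ i, 1 ≤ a i) {m k : ℕ} (hm : m % 2 = 1) (h : 1 ≤ m ∨ 1 ≤ k) :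
    Uni (rr a m k) (Cv a m) := by
  unfold Uni
  rw [rr_num ha h, rr_den ha h, Cv_num ha m, Cv_den ha m]
  have hdet := det_eq (a := a) m
  have heven : Even (m+1) := by rw [Nat.even_iff]; omega
  rw [heven.neg_one_pow] at hdet
  push_cast
  linear_combination hdet

lemma mediant_even (ha : ∀ i, 1 ≤ a i) {m k : ℕ} (h : 1 ≤ m ∨ 1 ≤ k) :
    mediant (Cv a m) (rr a m k) = rr a m (k+1) := by
  rw [mediant, rr_num ha h, rr_den ha h, Cv_num ha m, Cv_den ha m, rr]
  push_cast
  ring_nf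

lemma mediant_odd (ha : ∀ i, 1 ≤ a i) {m k : ℕ} (h : 1 ≤ m ∨ 1 ≤ k) :
    mediant (rr a m k) (Cv a m) = rr a m (k+1) := by
  rw [mediant, rr_num ha h, rr_den ha h, Cv_num ha m, Cv_den ha m, rr]
  push_cast
  ring_nf

lemma Cv_nonneg (m : ℕ) : 0 ≤ Cv a m := by
  rw [Cv]; positivity

lemma rr_nonneg (m k : ℕ) : 0 ≤ rr a m k := by
  rw [rr]; positivity

lemma rr_le_one (ha : ∀ i, 1 ≤ a i) {m k : ℕ} (h : 1 ≤ m ∨ 1 ≤ k) :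
    rr a m k ≤ 1 := by
  rw [rr]
  rw [div_le_one (by exact_mod_cast rr_den_pos ha h)]
  exact_mod_cast rr_num_le_den ha h

lemma Cv_le_one (ha : ∀ i, 1 ≤ a i) (m : ℕ) : Cv a m ≤ 1 := by
  rw [Cv_eq_rr]; exact rr_le_one ha (Or.inl (Nat.le_add_left 1 m))

end SalemAux
namespace SalemAux

/-- The contraction factor in block `m`. -/
noncomputable def muF (lam : ℝ) (m : ℕ) : ℝ := if m % 2 = 0 then lam else 1 - lam

section G

variable {lam : ℝ} {g : ℝ → ℝ} {a : ℕ → ℕ}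

lemma gmed
    (hrec : ∀ n : ℕ, ∀ x y : ℚ, IsConsecutive (sternBrocot n) x y →
      g ((mediant x y : ℚ) : ℝ) = g (x : ℝ) + lam * (g (y : ℝ) - g (x : ℝ)))
    {u v : ℚ} (hu : 0 ≤ u) (hv : v ≤ 1) (h : Uni u v) :
    g ((mediant u v : ℚ) : ℝ) = g (u : ℝ) + lam * (g (v : ℝ) - g (u : ℝ)) := by
  obtain ⟨n, hc⟩ := exists_consecutive hu hv h
  exact hrec n u v hc

lemma gstep
    (hrec : ∀ n : ℕ, ∀ x y : ℚ, IsConsecutive (sternBrocot n) x y →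
      g ((mediant x y : ℚ) : ℝ) = g (x : ℝ) + lam * (g (y : ℝ) - g (x : ℝ)))
    (ha : ∀ i, 1 ≤ a i) {m k : ℕ} (h : 1 ≤ m ∨ 1 ≤ k) :
    g ((rr a m (k+1) : ℚ) : ℝ) - g ((Cv a m : ℚ) : ℝ)
      = muF lam m * (g ((rr a m k : ℚ) : ℝ) - g ((Cv a m : ℚ) : ℝ)) := by
  rcases Nat.mod_two_eq_zero_or_one m with hm | hm
  · have h1 := gmed hrec (Cv_nonneg (a := a) m) (rr_le_one ha h) (uni_even ha hm h)
    rw [mediant_even ha h] at h1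
    rw [muF, if_pos hm]
    linarith
  · have h1 := gmed hrec (rr_nonneg (a := a) m k) (Cv_le_one ha m) (uni_odd ha hm h)
    rw [mediant_odd ha h] at h1
    rw [muF, if_neg (by omega)]
    linarith

lemma gchain
    (hrec : ∀ n : ℕ, ∀ x y : ℚ, IsConsecutive (sternBrocot n) x y →
      g ((mediant x y : ℚ) : ℝ) = g (x : ℝ) + lam * (g (y : ℝ) - g (x : ℝ)))
    (ha : ∀ i, 1 ≤ a i) {m k : ℕ} (h : 1 ≤ m ∨ 1 ≤ k) :
    ∀ j, g ((rr a m (k+j) : ℚ) : ℝ) - g ((Cv a m : ℚ) : ℝ)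
      = muF lam m ^ j * (g ((rr a m k : ℚ) : ℝ) - g ((Cv a m : ℚ) : ℝ)) := by
  intro j
  induction j with
  | zero => simp
  | succ j ih =>
    have h' : 1 ≤ m ∨ 1 ≤ k + j := by omega
    rw [show k+(j+1) = (k+j)+1 from rfl, gstep hrec ha h', ih, pow_succ]
    ring

lemma rr_top (m : ℕ) : rr a (m+1) (a (m+1)) = Cv a (m+2) := by
  rw [rr, Cv, show m+2+1 = (m+1)+2 from rfl, cP_rec' a (m+1), cQ_rec' a (m+1),
    show m+1+1 = m+2 from rfl]
  congr 1 <;> push_cast <;> ring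

lemma rr_bot (m : ℕ) : rr a (m+1) 0 = Cv a m := by
  simp [rr, Cv]

lemma gblock
    (hrec : ∀ n : ℕ, ∀ x y : ℚ, IsConsecutive (sternBrocot n) x y →
      g ((mediant x y : ℚ) : ℝ) = g (x : ℝ) + lam * (g (y : ℝ) - g (x : ℝ)))
    (ha : ∀ i, 1 ≤ a i) (m : ℕ) :
    g ((Cv a (m+2) : ℚ) : ℝ) - g ((Cv a (m+1) : ℚ) : ℝ)
      = - (muF lam (m+1) ^ (a (m+1))
          * (g ((Cv a (m+1) : ℚ) : ℝ) - g ((Cv a m : ℚ) : ℝ))) := by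
  have h := gchain hrec ha (m := m+1) (k := 0) (Or.inl (Nat.le_add_left 1 m)) (a (m+1))
  rw [Nat.zero_add, rr_top m, rr_bot m] at h
  rw [h]
  ring

lemma Cv_zero : Cv a 0 = 0 := by
  simp [Cv, cP, cQ]

lemma rr_one_one : rr a 0 1 = 1 := by
  simp [rr, cP, cQ]

lemma gC1
    (hrec : ∀ n : ℕ, ∀ x y : ℚ, IsConsecutive (sternBrocot n) x y →
      g ((mediant x y : ℚ) : ℝ) = g (x : ℝ) + lam * (g (y : ℝ) - g (x : ℝ)))
    (ha : ∀ i, 1 ≤ a i) (hg0 : g 0 = 0) (hg1 : g 1 = 1) :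
    g ((Cv a 1 : ℚ) : ℝ) = lam ^ (a 0 - 1) := by
  have h := gchain hrec ha (m := 0) (k := 1) (Or.inr le_rfl) (a 0 - 1)
  have hk : 1 + (a 0 - 1) = a 0 := by have := ha 0; omega
  rw [hk] at h
  have htop : rr a 0 (a 0) = Cv a 1 := by
    rw [rr, Cv, show (1:ℕ)+1 = 0+2 from rfl, cP_rec' a 0, cQ_rec' a 0]
    norm_num [cP, cQ]
  rw [htop, rr_one_one, Cv_zero] at h
  have hmu : muF lam 0 = lam := by simp [muF]
  rw [hmu] at h
  simp only [Rat.cast_zero, Rat.cast_one, hg0, hg1] at h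
  linarith

end G

end SalemAux
namespace SalemAux

/-- Sum of the even-indexed partial quotients among the first `j+1`. -/
def AS (a : ℕ → ℕ) (j : ℕ) : ℕ :=
  ∑ i ∈ (Finset.range (j+1)).filter (fun i => i % 2 = 0), a i

/-- Sum of the odd-indexed partial quotients among the first `j+1`. -/
def BS (a : ℕ → ℕ) (j : ℕ) : ℕ :=
  ∑ i ∈ (Finset.range (j+1)).filter (fun i => i % 2 = 1), a i

variable {a : ℕ → ℕ}

lemma AS_zero : AS a 0 = a 0 := by
  norm_num [AS, Finset.filter_singleton]

lemma BS_zero : BS a 0 = 0 := by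
  norm_num [BS, Finset.filter_singleton]

lemma AS_succ (j : ℕ) :
    AS a (j+1) = if (j+1) % 2 = 0 then AS a j + a (j+1) else AS a j := by
  rw [AS, AS, Finset.range_add_one, Finset.filter_insert]
  split_ifs with h
  · rw [Finset.sum_insert (by simp)]
    exact Nat.add_comm _ _
  · rfl

lemma BS_succ (j : ℕ) :
    BS a (j+1) = if (j+1) % 2 = 1 then BS a j + a (j+1) else BS a j := by
  rw [BS, BS, Finset.range_add_one, Finset.filter_insert]
  split_ifs with h
  · rw [Finset.sum_insert (by simp)]
    exact Nat.add_comm _ _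
  · rfl

lemma AS_pos (ha : ∀ i, 1 ≤ a i) (j : ℕ) : 1 ≤ AS a j := by
  refine le_trans (ha 0) ?_
  exact Finset.single_le_sum (f := a) (fun i _ => Nat.zero_le (a i)) (by simp)

section G

variable {lam : ℝ} {g : ℝ → ℝ}

lemma gmain
    (hrec : ∀ n : ℕ, ∀ x y : ℚ, IsConsecutive (sternBrocot n) x y →
      g ((mediant x y : ℚ) : ℝ) = g (x : ℝ) + lam * (g (y : ℝ) - g (x : ℝ)))
    (ha : ∀ i, 1 ≤ a i) (hg0 : g 0 = 0) (hg1 : g 1 = 1) :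
    ∀ m : ℕ,
      g ((Cv a m : ℚ) : ℝ)
        = (∑ j ∈ Finset.range m,
            (-1:ℝ)^j * lam ^ (AS a j - 1) * (1-lam) ^ (BS a j)) ∧
      g ((Cv a (m+1) : ℚ) : ℝ) - g ((Cv a m : ℚ) : ℝ)
        = (-1:ℝ)^m * lam ^ (AS a m - 1) * (1-lam) ^ (BS a m) := by
  intro m
  induction m with
  | zero =>
    constructor
    · simp [Cv_zero, hg0]
    · rw [show (0:ℕ)+1 = 1 from rfl, gC1 hrec ha hg0 hg1, Cv_zero, AS_zero, BS_zero]
      norm_num [hg0]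
  | succ m ih =>
    obtain ⟨hS, hD⟩ := ih
    constructor
    · rw [Finset.sum_range_succ, ← hS, ← hD]
      ring
    · rw [show m+1+1 = m+2 from rfl, gblock hrec ha m, hD]
      rcases Nat.mod_two_eq_zero_or_one (m+1) with hp | hp
      · rw [AS_succ, BS_succ, if_pos hp, if_neg (by omega)]
        have h1 : AS a m + a (m+1) - 1 = (AS a m - 1) + a (m+1) := by
          have := AS_pos ha m; omega
        rw [h1, pow_add, muF, if_pos hp, pow_succ]
        ring
      · rw [AS_succ, BS_succ, if_neg (by omega), if_pos hp, pow_add, muF,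
          if_neg (by omega), pow_succ]
        ring

end G

end SalemAux
open SalemAux in
/-- Salem-type series for `g_λ` at irrational points: the series
converges and its sum is `g_λ(x)`. -/
theorem tichyUitz_salem_formula_irrational
    (lam : ℝ) (hlam : lam ∈ Set.Ioo (0 : ℝ) 1)
    (g : ℝ → ℝ)
    (hg0 : g 0 = 0) (hg1 : g 1 = 1)
    (hgc : ContinuousOn g (Set.Icc (0 : ℝ) 1))
    (hrec : ∀ n : ℕ, ∀ x y : ℚ, IsConsecutive (sternBrocot n) x y →
      g ((mediant x y : ℚ) : ℝ) = g (x : ℝ) + lam * (g (y : ℝ) - g (x : ℝ)))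
    (x : ℝ) (hx : x ∈ Set.Ioo (0 : ℝ) 1) (hirr : Irrational x)
    (a : ℕ → ℕ) (ha : ∀ i, 1 ≤ a i)
    (hcf : Filter.Tendsto
      (fun m : ℕ => ((cfVal (List.ofFn (fun i : Fin m => a i)) : ℚ) : ℝ))
      Filter.atTop (nhds x)) :
    Filter.Tendsto
      (fun m : ℕ => ∑ j ∈ Finset.range m,
        (-1 : ℝ) ^ j *
          lam ^ ((∑ i ∈ (Finset.range (j + 1)).filter (fun i => i % 2 = 0),
                    a i) - 1) *
          (1 - lam) ^ (∑ i ∈ (Finset.range (j + 1)).filter (fun i => i % 2 = 1),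
                    a i))
      Filter.atTop (nhds (g x)) := by
  have hterm : ∀ m : ℕ,
      (∑ j ∈ Finset.range m,
        (-1 : ℝ) ^ j *
          lam ^ ((∑ i ∈ (Finset.range (j + 1)).filter (fun i => i % 2 = 0),
                    a i) - 1) *
          (1 - lam) ^ (∑ i ∈ (Finset.range (j + 1)).filter (fun i => i % 2 = 1),
                    a i))
        = g ((Cv a m : ℚ) : ℝ) := by
    intro m
    have h := (gmain hrec ha hg0 hg1 m).1
    simp only [AS, BS] at h
    exact h.symm
  have hCv : ∀ m : ℕ, ((cfVal (List.ofFn fun i : Fin m => a i) : ℚ) : ℝ)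
      = ((Cv a m : ℚ) : ℝ) := by
    intro m
    congr 1
    rw [cfVal_eq_cfP _ (by
      intro y hy
      rw [List.mem_ofFn] at hy
      obtain ⟨i, rfl⟩ := hy
      exact ha i), cfP_ofFn m a]
    rfl
  have hlim : Filter.Tendsto (fun m : ℕ => ((Cv a m : ℚ) : ℝ))
      Filter.atTop (nhds x) := by
    simpa only [hCv] using hcf
  have hmem : ∀ m : ℕ, ((Cv a m : ℚ) : ℝ) ∈ Set.Icc (0:ℝ) 1 := by
    intro m
    constructor
    · have := Cv_nonneg (a := a) m
      exact_mod_cast this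
    · have := Cv_le_one ha m
      exact_mod_cast this
  have hx' : x ∈ Set.Icc (0:ℝ) 1 := ⟨hx.1.le, hx.2.le⟩
  have hcw : Filter.Tendsto g (nhdsWithin x (Set.Icc (0:ℝ) 1)) (nhds (g x)) :=
    hgc x hx'
  have hfinal : Filter.Tendsto (fun m : ℕ => g ((Cv a m : ℚ) : ℝ))
      Filter.atTop (nhds (g x)) :=
    hcw.comp (tendsto_nhdsWithin_of_tendsto_nhds_of_eventually_within _ hlim
      (Filter.Eventually.of_forall hmem))
  have heq : (fun m : ℕ => ∑ j ∈ Finset.range m,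
        (-1 : ℝ) ^ j *
          lam ^ ((∑ i ∈ (Finset.range (j + 1)).filter (fun i => i % 2 = 0),
                    a i) - 1) *
          (1 - lam) ^ (∑ i ∈ (Finset.range (j + 1)).filter (fun i => i % 2 = 1),
                    a i))
      = fun m : ℕ => g ((Cv a m : ℚ) : ℝ) := funext hterm
  rw [heq]
  exact hfinal
end

section
/- For every n ≥ 1, a rational number ξ ∈ (0,1) belongs to Q_n (the set of mediants newly inserted at step n of the Stern–Brocot construction) if and only if S(ξ) = n+1, where S(ξ) is the sum of the partial quotients in the regular continued fraction expansion ξ = [0; a_1, …, a_m] with a_m ≥ 2. -/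
open Set Filter

/-! ### auxiliary development -/


/-- good CF lists -/
def GoodCF (a : List ℕ) : Prop :=
  a ≠ [] ∧ (∀ ai ∈ a, 1 ≤ ai) ∧ 2 ≤ a.getLastD 0

lemma goodCF_tail {x : ℕ} {t : List ℕ} (h : GoodCF (x :: t)) (ht : t ≠ []) : GoodCF t := by
  obtain ⟨-, h1, h2⟩ := h
  refine ⟨ht, fun ai hai => h1 ai (List.mem_cons_of_mem _ hai), ?_⟩
  cases t with
  | nil => exact absurd rfl ht
  | cons b u => simpa [List.getLastD_cons] using h2

lemma goodCF_iff_isCF {x : ℚ} {a : List ℕ} : IsCF x a ↔ GoodCF a ∧ x = cfVal a := by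
  constructor
  · rintro ⟨h1, h2, h3⟩
    refine ⟨⟨?_, h1, h2⟩, h3⟩
    rintro rfl; simp at h2
  · rintro ⟨⟨_, h1, h2⟩, h3⟩; exact ⟨h1, h2, h3⟩

lemma cfVal_nonneg {a : List ℕ} (h : ∀ ai ∈ a, 1 ≤ ai) : 0 ≤ cfVal a := by
  induction a with
  | nil => simp [cfVal]
  | cons x t ih =>
    have hx : (1:ℚ) ≤ x := by exact_mod_cast h x (by simp)
    have ht := ih (fun ai hai => h ai (List.mem_cons_of_mem _ hai))
    simp only [cfVal]
    positivity

lemma cfVal_mem_Ioo {a : List ℕ} (h : GoodCF a) : cfVal a ∈ Set.Ioo (0:ℚ) 1 := by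
  induction a with
  | nil => exact absurd rfl h.1
  | cons x t ih =>
    have hx : (1:ℚ) ≤ x := by exact_mod_cast h.2.1 x (by simp)
    rcases eq_or_ne t [] with rfl | ht
    · have hx2 : (2:ℚ) ≤ x := by
        have := h.2.2; simp [List.getLastD_cons] at this
        exact_mod_cast this
      constructor
      · simp only [cfVal]; positivity
      · simp only [cfVal, add_zero]
        rw [div_lt_one (by linarith)]; linarith
    · have ht' := ih (goodCF_tail h ht)
      constructor
      · simp only [cfVal]
        exact one_div_pos.mpr (by linarith [ht'.1])
      · simp only [cfVal]
        rw [div_lt_one (by linarith [ht'.1])]; linarith [ht'.1]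

lemma cfVal_inj {a b : List ℕ} (ha : GoodCF a) (hb : GoodCF b) (h : cfVal a = cfVal b) :
    a = b := by
  induction a generalizing b with
  | nil => exact absurd rfl ha.1
  | cons x t ih =>
    cases b with
    | nil => exact absurd rfl hb.1
    | cons y s =>
      have hxt : 0 < (x:ℚ) + cfVal t := by
        have : (1:ℚ) ≤ x := by exact_mod_cast ha.2.1 x (by simp)
        have := cfVal_nonneg (fun ai hai => ha.2.1 ai (List.mem_cons_of_mem _ hai))
        linarith
      have hys : 0 < (y:ℚ) + cfVal s := by
        have : (1:ℚ) ≤ y := by exact_mod_cast hb.2.1 y (by simp)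
        have := cfVal_nonneg (fun ai hai => hb.2.1 ai (List.mem_cons_of_mem _ hai))
        linarith
      have heq : (x:ℚ) + cfVal t = (y:ℚ) + cfVal s := by
        have h' : 1 / ((x:ℚ) + cfVal t) = 1 / ((y:ℚ) + cfVal s) := h
        field_simp at h'
        linarith
      have htlt : cfVal t < 1 ∧ 0 ≤ cfVal t := by
        rcases eq_or_ne t [] with rfl | ht
        · simp [cfVal]
        · have := cfVal_mem_Ioo (goodCF_tail ha ht); exact ⟨this.2, this.1.le⟩
      have hslt : cfVal s < 1 ∧ 0 ≤ cfVal s := by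
        rcases eq_or_ne s [] with rfl | hs
        · simp [cfVal]
        · have := cfVal_mem_Ioo (goodCF_tail hb hs); exact ⟨this.2, this.1.le⟩
      have hxy : x = y := by
        have h1 : (x:ℚ) < y + 1 := by linarith [htlt.2, hslt.1]
        have h2 : (y:ℚ) < x + 1 := by linarith [hslt.2, htlt.1]
        have h1' : x < y + 1 := by exact_mod_cast h1
        have h2' : y < x + 1 := by exact_mod_cast h2
        omega
      subst hxy
      have hts : cfVal t = cfVal s := by
        have : (x:ℚ) + cfVal t = x + cfVal s := heq
        linarith
      rcases eq_or_ne t [] with rfl | ht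
      · rcases eq_or_ne s [] with rfl | hs
        · rfl
        · have := cfVal_mem_Ioo (goodCF_tail hb hs)
          rw [← hts] at this; simp [cfVal] at this
      · rcases eq_or_ne s [] with rfl | hs
        · have := cfVal_mem_Ioo (goodCF_tail ha ht)
          rw [hts] at this; simp [cfVal] at this
        · rw [ih (goodCF_tail ha ht) (goodCF_tail hb hs) hts]

/-! ### numerator/denominator pairs -/

/-- `(p, q)` with `cfVal a = p / q` in lowest terms. -/
def pQ : List ℕ → ℤ × ℤ
  | [] => (0, 1)
  | x :: t => ((pQ t).2, x * (pQ t).2 + (pQ t).1)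

lemma pQ_pos {a : List ℕ} (h : ∀ ai ∈ a, 1 ≤ ai) :
    0 ≤ (pQ a).1 ∧ 0 < (pQ a).2 ∧ (pQ a).1 ≤ (pQ a).2 := by
  induction a with
  | nil => simp [pQ]
  | cons x t ih =>
    have hx : (1:ℤ) ≤ x := by exact_mod_cast h x (by simp)
    obtain ⟨h1, h2, h3⟩ := ih (fun ai hai => h ai (List.mem_cons_of_mem _ hai))
    refine ⟨by simpa [pQ] using h2.le, ?_, ?_⟩ <;> simp only [pQ] <;> nlinarith

lemma pQ_coprime {a : List ℕ} : IsCoprime (pQ a).1 (pQ a).2 := by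
  induction a with
  | nil => simp [pQ]; exact isCoprime_zero_left.mpr isUnit_one
  | cons x t ih =>
    simp only [pQ]
    have h1 : IsCoprime ((pQ t).2) ((pQ t).1 + (pQ t).2 * x) :=
      (ih.symm).add_mul_left_right x
    have : (pQ t).1 + (pQ t).2 * x = x * (pQ t).2 + (pQ t).1 := by ring
    rwa [this] at h1

lemma cfVal_eq_pQ {a : List ℕ} (h : ∀ ai ∈ a, 1 ≤ ai) :
    cfVal a = ((pQ a).1 : ℚ) / ((pQ a).2 : ℚ) := by
  induction a with
  | nil => simp [cfVal, pQ]
  | cons x t ih =>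
    have h' := fun ai hai => h ai (List.mem_cons_of_mem _ hai)
    obtain ⟨h1, h2, h3⟩ := pQ_pos h'
    have hx : (1:ℚ) ≤ x := by exact_mod_cast h x (by simp)
    have hq : (0:ℚ) < ((pQ t).2 : ℚ) := by exact_mod_cast h2
    have hp : (0:ℚ) ≤ ((pQ t).1 : ℚ) := by exact_mod_cast h1
    simp only [cfVal, pQ, ih h']
    have hstep : (x:ℚ) + ((pQ t).1:ℚ)/((pQ t).2:ℚ)
        = (((x:ℕ):ℚ) * ((pQ t).2:ℚ) + ((pQ t).1:ℚ)) / ((pQ t).2:ℚ) := by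
      field_simp
    rw [hstep, one_div_div]
    push_cast
    ring_nf

def pstep (x : ℕ) (P : ℤ × ℤ) : ℤ × ℤ := (P.2, x * P.2 + P.1)

/-- parent pairs -/
def par : List ℕ → (ℤ × ℤ) × (ℤ × ℤ)
  | [] => ((0,1),(1,0))
  | [k] => ((0,1),(1,(k:ℤ)-1))
  | x :: y :: t => (pstep x (par (y::t)).1, pstep x (par (y::t)).2)

def inc : List ℕ → List ℕ
  | [] => []
  | [k] => [k+1]
  | x :: y :: t => x :: inc (y::t)

def dec2 : List ℕ → List ℕ
  | [] => []
  | [k] => [k-1, 2]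
  | x :: y :: t => x :: dec2 (y::t)

lemma pQ_cons (x : ℕ) (t : List ℕ) : pQ (x :: t) = pstep x (pQ t) := rfl

lemma par_cons {x : ℕ} {l : List ℕ} (hl : l ≠ []) :
    par (x :: l) = (pstep x (par l).1, pstep x (par l).2) := by
  cases l with
  | nil => exact absurd rfl hl
  | cons y t => rfl

lemma inc_cons {x : ℕ} {l : List ℕ} (hl : l ≠ []) : inc (x :: l) = x :: inc l := by
  cases l with
  | nil => exact absurd rfl hl
  | cons y t => rfl

lemma dec2_cons {x : ℕ} {l : List ℕ} (hl : l ≠ []) : dec2 (x :: l) = x :: dec2 l := by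
  cases l with
  | nil => exact absurd rfl hl
  | cons y t => rfl

lemma inc_ne_nil {a : List ℕ} (h : a ≠ []) : inc a ≠ [] := by
  cases a with
  | nil => exact absurd rfl h
  | cons x t => cases t <;> simp [inc]

lemma dec2_ne_nil {a : List ℕ} (h : a ≠ []) : dec2 a ≠ [] := by
  cases a with
  | nil => exact absurd rfl h
  | cons x t => cases t <;> simp [dec2]

lemma K1 {a : List ℕ} (h : a ≠ []) : par (inc a) = ((par a).1, pQ a) := by
  induction a with
  | nil => exact absurd rfl h
  | cons x t ih =>
    cases t with
    | nil =>
      show par [x+1] = _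
      simp only [par, pQ, pstep, Prod.mk.injEq]
      push_cast
      ring_nf
      norm_num
    | cons y u =>
      have hne : (y :: u : List ℕ) ≠ [] := by simp
      rw [inc_cons hne, par_cons (inc_ne_nil hne), ih hne, par_cons hne]
      rfl

lemma K2 {a : List ℕ} (h : GoodCF a) : par (dec2 a) = ((par a).2, pQ a) := by
  obtain ⟨hne, hmem, hlast⟩ := h
  induction a with
  | nil => exact absurd rfl hne
  | cons x t ih =>
    cases t with
    | nil =>
      have hx : 2 ≤ x := by simpa [List.getLastD_cons] using hlast
      show par [x-1, 2] = _
      have hc : ((x-1:ℕ):ℤ) = (x:ℤ)-1 := by omega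
      simp only [par, pQ, pstep, Prod.mk.injEq, hc]
      push_cast
      ring_nf
      norm_num
    | cons y u =>
      have hne' : (y :: u : List ℕ) ≠ [] := by simp
      have hlast' : 2 ≤ (y :: u).getLastD 0 := by
        simpa [List.getLastD_cons] using hlast
      rw [dec2_cons hne', par_cons (dec2_ne_nil hne'),
        ih hne' (fun ai hai => hmem ai (List.mem_cons_of_mem _ hai)) hlast',
        par_cons hne']
      rfl

lemma goodCF_cons {x : ℕ} {l : List ℕ} (hx : 1 ≤ x) (hl : GoodCF l) : GoodCF (x :: l) := by
  obtain ⟨hne, hmem, hlast⟩ := hl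
  refine ⟨by simp, ?_, ?_⟩
  · intro ai hai
    rcases List.mem_cons.mp hai with rfl | h
    · exact hx
    · exact hmem ai h
  · cases l with
    | nil => exact absurd rfl hne
    | cons y u => simpa [List.getLastD_cons] using hlast

lemma goodCF_inc {a : List ℕ} (h : GoodCF a) : GoodCF (inc a) := by
  obtain ⟨hne, hmem, hlast⟩ := h
  induction a with
  | nil => exact absurd rfl hne
  | cons x t ih =>
    cases t with
    | nil =>
      have hx : 2 ≤ x := by simpa [List.getLastD_cons] using hlast
      exact ⟨by simp [inc], by intro ai hai; simp [inc] at hai; omega,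
        by simp [inc, List.getLastD_cons]; omega⟩
    | cons y u =>
      have hne' : (y :: u : List ℕ) ≠ [] := by simp
      rw [inc_cons hne']
      exact goodCF_cons (hmem x (by simp))
        (ih hne' (fun ai hai => hmem ai (List.mem_cons_of_mem _ hai))
          (by simpa [List.getLastD_cons] using hlast))

lemma goodCF_dec2 {a : List ℕ} (h : GoodCF a) : GoodCF (dec2 a) := by
  obtain ⟨hne, hmem, hlast⟩ := h
  induction a with
  | nil => exact absurd rfl hne
  | cons x t ih =>
    cases t with
    | nil =>
      have hx : 2 ≤ x := by simpa [List.getLastD_cons] using hlast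
      exact ⟨by simp [dec2], by intro ai hai; simp [dec2] at hai; omega,
        by simp [dec2, List.getLastD_cons]⟩
    | cons y u =>
      have hne' : (y :: u : List ℕ) ≠ [] := by simp
      rw [dec2_cons hne']
      exact goodCF_cons (hmem x (by simp))
        (ih hne' (fun ai hai => hmem ai (List.mem_cons_of_mem _ hai))
          (by simpa [List.getLastD_cons] using hlast))

lemma sum_inc {a : List ℕ} (h : a ≠ []) : (inc a).sum = a.sum + 1 := by
  induction a with
  | nil => exact absurd rfl h
  | cons x t ih =>
    cases t with
    | nil => simp [inc]
    | cons y u =>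
      have hne : (y :: u : List ℕ) ≠ [] := by simp
      rw [inc_cons hne]
      simp [ih hne]
      omega

lemma sum_dec2 {a : List ℕ} (h : GoodCF a) : (dec2 a).sum = a.sum + 1 := by
  obtain ⟨hne, hmem, hlast⟩ := h
  induction a with
  | nil => exact absurd rfl hne
  | cons x t ih =>
    cases t with
    | nil =>
      have hx : 2 ≤ x := by simpa [List.getLastD_cons] using hlast
      simp [dec2]; omega
    | cons y u =>
      have hne' : (y :: u : List ℕ) ≠ [] := by simp
      rw [dec2_cons hne']
      simp [ih hne' (fun ai hai => hmem ai (List.mem_cons_of_mem _ hai))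
        (by simpa [List.getLastD_cons] using hlast)]
      omega

lemma sum_ge_two {a : List ℕ} (h : GoodCF a) : 2 ≤ a.sum := by
  obtain ⟨hne, hmem, hlast⟩ := h
  induction a with
  | nil => exact absurd rfl hne
  | cons x t ih =>
    cases t with
    | nil => simpa [List.getLastD_cons] using hlast
    | cons y u =>
      have := ih (by simp) (fun ai hai => hmem ai (List.mem_cons_of_mem _ hai))
        (by simpa [List.getLastD_cons] using hlast)
      simp only [List.sum_cons] at this ⊢
      omega

lemma sum_eq_two {a : List ℕ} (h : GoodCF a) (hs : a.sum = 2) : a = [2] := by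
  obtain ⟨hne, hmem, hlast⟩ := h
  cases a with
  | nil => exact absurd rfl hne
  | cons x t =>
    cases t with
    | nil =>
      have hx : x = 2 := by simpa using hs
      simp [hx]
    | cons y u =>
      exfalso
      have h2 := sum_ge_two ⟨by simp, fun ai hai => hmem ai (List.mem_cons_of_mem _ hai),
        by simpa [List.getLastD_cons] using hlast⟩
      have hx : 1 ≤ x := hmem x (by simp)
      simp only [List.sum_cons] at hs h2
      omega

lemma decompose {a : List ℕ} (h : GoodCF a) (hs : 3 ≤ a.sum) :
    ∃ b, GoodCF b ∧ b.sum + 1 = a.sum ∧ (a = inc b ∨ a = dec2 b) := by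
  induction a with
  | nil => exact absurd rfl h.1
  | cons x t ih =>
    cases t with
    | nil =>
      have hx : 3 ≤ x := by simpa using hs
      refine ⟨[x-1], ⟨by simp, by intro ai hai; simp at hai; omega,
        by simp [List.getLastD_cons]; omega⟩, by simp; omega, Or.inl ?_⟩
      show _ = [x-1+1]
      simp; omega
    | cons y u =>
      have hne' : (y :: u : List ℕ) ≠ [] := by simp
      have hgt : GoodCF (y :: u) := goodCF_tail h hne'
      have hx : 1 ≤ x := h.2.1 x (by simp)
      rcases Nat.lt_or_ge (y :: u).sum 3 with hlt | hge
      · -- tail sum = 2, tail = [2]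
        have ht2 : (y :: u : List ℕ) = [2] := sum_eq_two hgt (by have := sum_ge_two hgt; omega)
        refine ⟨[x+1], ⟨by simp, by intro ai hai; simp at hai; omega,
          by simp [List.getLastD_cons]; omega⟩, ?_, Or.inr ?_⟩
        · rw [ht2]; simp
        · rw [ht2]
          show _ = [x+1-1, 2]
          simp
      · obtain ⟨b, hb, hbs, hbe⟩ := ih hgt hge
        refine ⟨x :: b, goodCF_cons hx hb, ?_, ?_⟩
        · simp only [List.sum_cons] at hbs ⊢; omega
        · rcases hbe with h1 | h1
          · exact Or.inl (by rw [inc_cons hb.1, ← h1])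
          · exact Or.inr (by rw [dec2_cons hb.1, ← h1])

structure ParProps (a : List ℕ) : Prop where
  q1_pos : 0 < (par a).1.2
  q2_pos : 0 < (par a).2.2
  p1_nonneg : 0 ≤ (par a).1.1
  p2_nonneg : 0 ≤ (par a).2.1
  cop1 : IsCoprime (par a).1.1 (par a).1.2
  cop2 : IsCoprime (par a).2.1 (par a).2.2
  sum_p : (par a).1.1 + (par a).2.1 = (pQ a).1
  sum_q : (par a).1.2 + (par a).2.2 = (pQ a).2

lemma parProps {a : List ℕ} (h : GoodCF a) : ParProps a := by
  obtain ⟨hne, hmem, hlast⟩ := h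
  induction a with
  | nil => exact absurd rfl hne
  | cons x t ih =>
    cases t with
    | nil =>
      have hx : 2 ≤ x := by simpa [List.getLastD_cons] using hlast
      have hx' : (2:ℤ) ≤ (x:ℤ) := by exact_mod_cast hx
      constructor <;> simp [par, pQ, pstep]
      · omega
      · exact isCoprime_zero_left.mpr isUnit_one
      · exact isCoprime_one_left
    | cons y u =>
      have hne' : (y :: u : List ℕ) ≠ [] := by simp
      have P := ih hne' (fun ai hai => hmem ai (List.mem_cons_of_mem _ hai))
        (by simpa [List.getLastD_cons] using hlast)
      have hx : 1 ≤ x := hmem x (by simp)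
      have hx' : (1:ℤ) ≤ (x:ℤ) := by exact_mod_cast hx
      constructor <;> simp only [par_cons hne', pstep, pQ_cons]
      · nlinarith [P.q1_pos, P.p1_nonneg]
      · nlinarith [P.q2_pos, P.p2_nonneg]
      · exact P.q1_pos.le
      · exact P.q2_pos.le
      · have h1 := (P.cop1.symm).add_mul_left_right (x:ℤ)
        have : (par (y::u)).1.1 + (par (y::u)).1.2 * (x:ℤ)
            = (x:ℤ) * (par (y::u)).1.2 + (par (y::u)).1.1 := by ring
        rwa [this] at h1
      · have h1 := (P.cop2.symm).add_mul_left_right (x:ℤ)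
        have : (par (y::u)).2.1 + (par (y::u)).2.2 * (x:ℤ)
            = (x:ℤ) * (par (y::u)).2.2 + (par (y::u)).2.1 := by ring
        rwa [this] at h1
      · exact P.sum_q
      · have hq := P.sum_q
        have hp := P.sum_p
        simp only [pQ_cons, pstep] at hq hp ⊢
        push_cast
        linear_combination (x:ℤ) * hq + hp

def ratOf (P : ℤ × ℤ) : ℚ := (P.1 : ℚ) / (P.2 : ℚ)

lemma ratOf_num_den {P : ℤ × ℤ} (hq : 0 < P.2) (hc : IsCoprime P.1 P.2) :
    (ratOf P).num = P.1 ∧ ((ratOf P).den : ℤ) = P.2 := by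
  have hcop : Nat.Coprime P.1.natAbs P.2.natAbs := by
    rw [Nat.Coprime, ← Int.gcd]
    exact Int.isCoprime_iff_gcd_eq_one.mp hc
  exact ⟨Rat.num_div_eq_of_coprime hq hcop, Rat.den_div_eq_of_coprime hq hcop⟩

lemma mediant_comm (x y : ℚ) : mediant x y = mediant y x := by
  simp [mediant, add_comm]

lemma medEq {a : List ℕ} (h : GoodCF a) :
    mediant (ratOf (par a).1) (ratOf (par a).2) = cfVal a := by
  have P := parProps h
  obtain ⟨n1, d1⟩ := ratOf_num_den P.q1_pos P.cop1
  obtain ⟨n2, d2⟩ := ratOf_num_den P.q2_pos P.cop2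
  have e1 : (ratOf (par a).1).num + (ratOf (par a).2).num = (pQ a).1 := by
    rw [n1, n2, P.sum_p]
  have e2 : (((ratOf (par a).1).den + (ratOf (par a).2).den : ℕ) : ℤ) = (pQ a).2 := by
    rw [Nat.cast_add, d1, d2, P.sum_q]
  have e2' : (((ratOf (par a).1).den + (ratOf (par a).2).den : ℕ) : ℚ) = ((pQ a).2 : ℚ) := by
    exact_mod_cast congrArg (fun z : ℤ => (z : ℚ)) e2
  rw [cfVal_eq_pQ h.2.1, mediant, e1, e2']

lemma mediant_mem_Ioo {x y : ℚ} (h : x < y) : mediant x y ∈ Set.Ioo x y := by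
  have hbx : (0:ℚ) < (x.den : ℚ) := by exact_mod_cast x.pos
  have hby : (0:ℚ) < (y.den : ℚ) := by exact_mod_cast y.pos
  have hx : x = (x.num : ℚ) / (x.den : ℚ) := (Rat.num_div_den x).symm
  have hy : y = (y.num : ℚ) / (y.den : ℚ) := (Rat.num_div_den y).symm
  have hlt : (x.num : ℚ) * y.den < (y.num : ℚ) * x.den := by
    rw [hx, hy] at h
    exact (div_lt_div_iff₀ hbx hby).mp h
  have hmed : mediant x y = ((x.num : ℚ) + y.num) / ((x.den : ℚ) + y.den) := by
    rw [mediant]; push_cast; ring_nf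
  constructor
  · rw [hmed]
    conv_lhs => rw [hx]
    rw [div_lt_div_iff₀ hbx (by linarith)]
    nlinarith
  · rw [hmed]
    conv_rhs => rw [hy]
    rw [div_lt_div_iff₀ (by linarith) hby]
    nlinarith

lemma sternBrocot_succ (n : ℕ) : sternBrocot (n+1) = sternBrocot n ∪
    {z | ∃ x y : ℚ, IsConsecutive (sternBrocot n) x y ∧ z = mediant x y} := rfl

lemma sternBrocot_subset_succ (n : ℕ) : sternBrocot n ⊆ sternBrocot (n+1) := by
  rw [sternBrocot_succ]; exact Set.subset_union_left

/-- distinct consecutive pairs have disjoint open intervals -/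
lemma consecutive_overlap {S : Set ℚ} {u v u' v' z : ℚ}
    (h : IsConsecutive S u v) (h' : IsConsecutive S u' v')
    (hz : z ∈ Set.Ioo u v) (hz' : z ∈ Set.Ioo u' v') : u = u' ∧ v = v' := by
  obtain ⟨hu, hv, huv, hno⟩ := h
  obtain ⟨hu', hv', huv', hno'⟩ := h'
  have h1 : u' ≤ u := by
    by_contra hc
    push_neg at hc
    exact hno u' hu' ⟨hc, lt_trans hz'.1 hz.2⟩
  have h2 : v ≤ v' := by
    by_contra hc
    push_neg at hc
    exact hno v' hv' ⟨lt_trans hz.1 hz'.2, hc⟩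
  constructor
  · rcases eq_or_lt_of_le h1 with h3 | h3
    · exact h3.symm
    · exact absurd ⟨h3, lt_trans hz.1 hz'.2⟩ (hno' u hu)
  · rcases eq_or_lt_of_le h2 with h3 | h3
    · exact h3
    · exact absurd ⟨lt_trans hz'.1 hz.2, h3⟩ (hno' v hv)

/-- the recursive structure of consecutive pairs -/
lemma consecutive_succ_iff {n : ℕ} {x y : ℚ} :
    IsConsecutive (sternBrocot (n+1)) x y ↔
      ∃ u v : ℚ, IsConsecutive (sternBrocot n) u v ∧
        ((x = u ∧ y = mediant u v) ∨ (x = mediant u v ∧ y = v)) := by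
  constructor
  · rintro ⟨hx, hy, hxy, hno⟩
    rw [sternBrocot_succ] at hx hy
    have hmem : ∀ w ∈ sternBrocot (n+1), True := fun _ _ => trivial
    -- at least one of x, y is a new mediant
    rcases hy with hy | ⟨u, v, huv, rfl⟩
    · rcases hx with hx | ⟨u, v, huv, rfl⟩
      · -- both old: contradiction
        exfalso
        have hcons : IsConsecutive (sternBrocot n) x y :=
          ⟨hx, hy, hxy, fun z hz hb => hno z (sternBrocot_subset_succ n hz) hb⟩
        have hm : mediant x y ∈ sternBrocot (n+1) := by
          rw [sternBrocot_succ]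
          exact Or.inr ⟨x, y, hcons, rfl⟩
        exact hno _ hm (mediant_mem_Ioo hxy)
      · -- x is a new mediant, y old: show y = v
        have hxIoo := mediant_mem_Ioo huv.2.2.1
        have hvy : y ≤ v := by
          by_contra hc
          push_neg at hc
          exact hno v (sternBrocot_subset_succ n huv.2.1) ⟨hxIoo.2, hc⟩
        rcases eq_or_lt_of_le hvy with h3 | h3
        · exact ⟨u, v, huv, Or.inr ⟨rfl, h3⟩⟩
        · exfalso
          exact huv.2.2.2 y hy ⟨lt_trans hxIoo.1 hxy, h3⟩
    · -- y is a new mediant: show x = u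
      have hyIoo := mediant_mem_Ioo huv.2.2.1
      have hux : u ≤ x := by
        by_contra hc
        push_neg at hc
        exact hno u (sternBrocot_subset_succ n huv.1) ⟨hc, hyIoo.1⟩
      rcases eq_or_lt_of_le hux with h3 | h3
      · exact ⟨u, v, huv, Or.inl ⟨h3.symm, rfl⟩⟩
      · exfalso
        -- u < x < mediant u v < v ; x ∈ SB (n+1)
        have hxIoo : x ∈ Set.Ioo u v := ⟨h3, lt_trans hxy hyIoo.2⟩
        rcases hx with hx | ⟨u', v', huv', rfl⟩
        · exact huv.2.2.2 x hx ⟨hxIoo.1, hxIoo.2⟩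
        · have hxIoo' := mediant_mem_Ioo huv'.2.2.1
          obtain ⟨rfl, rfl⟩ := consecutive_overlap huv' huv hxIoo' hxIoo
          exact absurd rfl (ne_of_lt hxy)
  · rintro ⟨u, v, huv, hcase⟩
    have hIoo := mediant_mem_Ioo huv.2.2.1
    have hmSB : mediant u v ∈ sternBrocot (n+1) := by
      rw [sternBrocot_succ]
      exact Or.inr ⟨u, v, huv, rfl⟩
    have hnothing : ∀ z ∈ sternBrocot (n+1), z ∈ Set.Ioo u v → z = mediant u v := by
      intro z hz hzIoo
      rw [sternBrocot_succ] at hz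
      rcases hz with hz | ⟨u', v', huv', rfl⟩
      · exact absurd ⟨hzIoo.1, hzIoo.2⟩ (huv.2.2.2 z hz)
      · have hzIoo' := mediant_mem_Ioo huv'.2.2.1
        obtain ⟨rfl, rfl⟩ := consecutive_overlap huv' huv hzIoo' hzIoo
        rfl
    rcases hcase with ⟨rfl, rfl⟩ | ⟨rfl, rfl⟩
    · refine ⟨sternBrocot_subset_succ n huv.1, hmSB, hIoo.1, ?_⟩
      rintro z hz ⟨h1, h2⟩
      have := hnothing z hz ⟨h1, lt_trans h2 hIoo.2⟩
      exact absurd (this ▸ h2) (lt_irrefl _)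
    · refine ⟨hmSB, sternBrocot_subset_succ n huv.2.1, hIoo.2, ?_⟩
      rintro z hz ⟨h1, h2⟩
      have := hnothing z hz ⟨lt_trans hIoo.1 h1, h2⟩
      exact absurd (this ▸ h1) (lt_irrefl _)

lemma ratOf_pQ {a : List ℕ} (h : GoodCF a) : ratOf (pQ a) = cfVal a :=
  (cfVal_eq_pQ h.2.1).symm

lemma consecutive_zero_iff {x y : ℚ} :
    IsConsecutive (sternBrocot 0) x y ↔ x = 0 ∧ y = 1 := by
  constructor
  · rintro ⟨hx, hy, hxy, -⟩
    have hx' : x = 0 ∨ x = 1 := hx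
    have hy' : y = 0 ∨ y = 1 := hy
    rcases hx' with rfl | rfl <;> rcases hy' with rfl | rfl <;> norm_num at hxy <;> simp
  · rintro ⟨rfl, rfl⟩
    refine ⟨Or.inl rfl, Or.inr rfl, by norm_num, ?_⟩
    rintro z (rfl | rfl) ⟨h1, h2⟩ <;> linarith

lemma par_two : par [2] = ((0, 1), (1, 1)) := by
  norm_num [par]

/-- Forward structure: every consecutive pair is a parent pair of a good CF list. -/
lemma inv_forward : ∀ n : ℕ, ∀ x y : ℚ, IsConsecutive (sternBrocot n) x y →
    ∃ a : List ℕ, GoodCF a ∧ a.sum = n + 2 ∧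
      ((x = ratOf (par a).1 ∧ y = ratOf (par a).2) ∨
       (x = ratOf (par a).2 ∧ y = ratOf (par a).1)) := by
  intro n
  induction n with
  | zero =>
    intro x y h
    obtain ⟨rfl, rfl⟩ := consecutive_zero_iff.mp h
    refine ⟨[2], ⟨by simp, by intro ai hai; simp at hai; omega, by simp⟩, by simp, Or.inl ?_⟩
    rw [par_two]
    constructor <;> simp [ratOf]
  | succ n ih =>
    intro x y h
    obtain ⟨u, v, huv, hcase⟩ := consecutive_succ_iff.mp h
    obtain ⟨b, hb, hbs, hor⟩ := ih u v huv
    have hm : mediant u v = cfVal b := by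
      rcases hor with ⟨rfl, rfl⟩ | ⟨rfl, rfl⟩
      · exact medEq hb
      · rw [mediant_comm]; exact medEq hb
    rcases hcase with ⟨rfl, rfl⟩ | ⟨rfl, rfl⟩
    · -- pair (u, mediant u v)
      rcases hor with ⟨hu, -⟩ | ⟨hu, -⟩
      · refine ⟨inc b, goodCF_inc hb, by rw [sum_inc hb.1, hbs], Or.inl ?_⟩
        rw [K1 hb.1]
        exact ⟨hu, by rw [hm, ← ratOf_pQ hb]⟩
      · refine ⟨dec2 b, goodCF_dec2 hb, by rw [sum_dec2 hb, hbs], Or.inl ?_⟩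
        rw [K2 hb]
        exact ⟨hu, by rw [hm, ← ratOf_pQ hb]⟩
    · -- pair (mediant u v, v)
      rcases hor with ⟨-, hv⟩ | ⟨-, hv⟩
      · refine ⟨dec2 b, goodCF_dec2 hb, by rw [sum_dec2 hb, hbs], Or.inr ?_⟩
        rw [K2 hb]
        exact ⟨by rw [hm, ← ratOf_pQ hb], hv⟩
      · refine ⟨inc b, goodCF_inc hb, by rw [sum_inc hb.1, hbs], Or.inr ?_⟩
        rw [K1 hb.1]
        exact ⟨by rw [hm, ← ratOf_pQ hb], hv⟩

/-- Backward structure: every good CF list of sum `n+2` arises as a parent pair. -/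
lemma inv_backward : ∀ n : ℕ, ∀ a : List ℕ, GoodCF a → a.sum = n + 2 →
    ∃ x y : ℚ, IsConsecutive (sternBrocot n) x y ∧
      ((x = ratOf (par a).1 ∧ y = ratOf (par a).2) ∨
       (x = ratOf (par a).2 ∧ y = ratOf (par a).1)) := by
  intro n
  induction n with
  | zero =>
    intro a ha hs
    obtain rfl := sum_eq_two ha (by omega)
    refine ⟨0, 1, consecutive_zero_iff.mpr ⟨rfl, rfl⟩, Or.inl ?_⟩
    rw [par_two]
    constructor <;> simp [ratOf]
  | succ n ih =>
    intro a ha hs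
    obtain ⟨b, hb, hbs, hbe⟩ := decompose ha (by omega)
    obtain ⟨u, v, huv, hor⟩ := ih b hb (by omega)
    have hm : mediant u v = cfVal b := by
      rcases hor with ⟨rfl, rfl⟩ | ⟨rfl, rfl⟩
      · exact medEq hb
      · rw [mediant_comm]; exact medEq hb
    rcases hbe with rfl | rfl
    · -- a = inc b, parents = (L_b, pQ b)
      rcases hor with ⟨hu, -⟩ | ⟨-, hv⟩
      · refine ⟨u, mediant u v, consecutive_succ_iff.mpr ⟨u, v, huv, Or.inl ⟨rfl, rfl⟩⟩,
          Or.inl ?_⟩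
        rw [K1 hb.1]
        exact ⟨hu, by rw [hm, ← ratOf_pQ hb]⟩
      · refine ⟨mediant u v, v, consecutive_succ_iff.mpr ⟨u, v, huv, Or.inr ⟨rfl, rfl⟩⟩,
          Or.inr ?_⟩
        rw [K1 hb.1]
        exact ⟨by rw [hm, ← ratOf_pQ hb], hv⟩
    · -- a = dec2 b, parents = (R_b, pQ b)
      rcases hor with ⟨-, hv⟩ | ⟨hu, -⟩
      · refine ⟨mediant u v, v, consecutive_succ_iff.mpr ⟨u, v, huv, Or.inr ⟨rfl, rfl⟩⟩,
          Or.inr ?_⟩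
        rw [K2 hb]
        exact ⟨by rw [hm, ← ratOf_pQ hb], hv⟩
      · refine ⟨u, mediant u v, consecutive_succ_iff.mpr ⟨u, v, huv, Or.inl ⟨rfl, rfl⟩⟩,
          Or.inl ?_⟩
        rw [K2 hb]
        exact ⟨hu, by rw [hm, ← ratOf_pQ hb]⟩

/-- a rational `ξ ∈ (0,1)` belongs to `Q_n` (`n ≥ 1`) iff the sum
of its partial quotients equals `n + 1`. -/
theorem mem_newMediants_iff_sum_partial_quotients
    (n : ℕ) (hn : 1 ≤ n) (ξ : ℚ) (hξ : ξ ∈ Set.Ioo (0 : ℚ) 1)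
    (a : List ℕ) (ha : IsCF ξ a) :
    ξ ∈ newMediants n ↔ a.sum = n + 1 := by
  obtain ⟨hga, hva⟩ := goodCF_iff_isCF.mp ha
  obtain ⟨k, rfl⟩ : ∃ k, n = k + 1 := ⟨n - 1, by omega⟩
  have hk : k + 1 - 1 = k := by omega
  constructor
  · rintro ⟨x, y, hxy, hmed⟩
    rw [hk] at hxy
    obtain ⟨b, hb, hbs, hor⟩ := inv_forward k x y hxy
    have hm : ξ = cfVal b := by
      rw [hmed]
      rcases hor with ⟨rfl, rfl⟩ | ⟨rfl, rfl⟩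
      · exact medEq hb
      · rw [mediant_comm]; exact medEq hb
    have hab : a = b := cfVal_inj hga hb (by rw [← hva, ← hm])
    rw [hab, hbs]
  · intro hs
    obtain ⟨x, y, hxy, hor⟩ := inv_backward k a hga (by omega)
    refine ⟨x, y, by rwa [hk], ?_⟩
    rw [hva]
    rcases hor with ⟨rfl, rfl⟩ | ⟨rfl, rfl⟩
    · exact (medEq hga).symm
    · rw [mediant_comm]; exact (medEq hga).symm
end
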